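/- arXiv:2503.00640 — 5 statements merged into one kernel-verified Lean document; each statement's English description precedes it below -/
import Mathlib

section
/- Concentration of the regularized degree matrix (Lemma on Λ and the error matrix E, rescaled form): There exist constants C₁ > 0 and c₁ > 0, depending only on C₀, such that: (a) for every i, 1 ≤ Λ_i ≤ C₁·β_n^{−1} (indeed Λ_i = β_n^{−1}(θ_i + τ_iθ̄ + λ_i/q²)); and (b) for all sufficiently large n, with probability at least 1 − e^{−c₁ξ}, max_{1≤i≤n} |L_i − Λ_i| ≤ C₁·ξ/(q·β_n), where L_i and Λ_i denote the i-th diagonal entries of L and Λ. -/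
open MeasureTheory Matrix Filter ProbabilityTheory

noncomputable section

/-- The parameter `ξ = (log n)^{1+a₀}`. -/
def xiPar (n : ℕ) (a₀ : ℝ) : ℝ := Real.log n ^ ((1 : ℝ) + a₀)

/-- Data of the rescaled model at dimension `n`: sample space, probability measure,
sparsity parameter `q`, regularization parameters `τ`, `λ`, noise matrix `W`,
signal matrix `H`, rank `K`, number of strong spikes `K₀`, population spiked
eigenvalues `δ` / eigenvectors `v` (1-based indexing), empirical eigenvalues
`δhat` / eigenvectors `vhat` (1-based indexing), and the QVE measures `ν`. -/
structure Mdl (n : ℕ) where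
  Ω : Type
  mΩ : MeasurableSpace Ω
  μ : @MeasureTheory.Measure Ω mΩ
  q : ℝ
  τ : Fin n → ℝ
  lam : Fin n → ℝ
  W : Ω → Matrix (Fin n) (Fin n) ℝ
  H : Matrix (Fin n) (Fin n) ℝ
  K : ℕ
  K₀ : ℕ
  δ : ℕ → ℝ
  v : ℕ → Fin n → ℝ
  δhat : Ω → ℕ → ℝ
  vhat : Ω → ℕ → Fin n → ℝ
  ν : Fin n → MeasureTheory.Measure ℝ

attribute [instance] Mdl.mΩ

namespace Mdl

variable {n : ℕ} (M : Mdl n)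

/-- entry variances `s_{ij} = E[W_{ij}²]` -/
def s (i j : Fin n) : ℝ := ∫ ω, (M.W ω i j) ^ 2 ∂M.μ

/-- `θ_i = q⁻¹ ∑_j H_{ij}` -/
def θ (i : Fin n) : ℝ := (∑ j, M.H i j) / M.q

/-- `θ̄ = n⁻¹ ∑_i θ_i` -/
def θbar : ℝ := (∑ i, M.θ i) / n

/-- `β_n = min_i (θ_i + τ_i θ̄ + λ_i/q²)` -/
def β : ℝ := ⨅ i : Fin n, (M.θ i + M.τ i * M.θbar + M.lam i / M.q ^ 2)

/-- degrees `d_i = ∑_j X̃_{ij}` -/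
def d (ω : M.Ω) (i : Fin n) : ℝ := ∑ j, (M.H i j + M.W ω i j)

/-- `d̄ = n⁻¹ ∑_j d_j` -/
def dbar (ω : M.Ω) : ℝ := (∑ j, M.d ω j) / n

/-- diagonal entries of `L = (qβ)⁻¹ diag(d_i + τ_i d̄ + λ_i/q)` -/
def Ld (ω : M.Ω) (i : Fin n) : ℝ :=
  (M.d ω i + M.τ i * M.dbar ω + M.lam i / M.q) / (M.q * M.β)

/-- diagonal entries of `Λ = E[L]` -/
def Λd (i : Fin n) : ℝ := (M.θ i + M.τ i * M.θbar + M.lam i / M.q ^ 2) / M.β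

/-- `W̄ = Λ^{-α} W Λ^{-α}` -/
def Wb (α : ℝ) (ω : M.Ω) : Matrix (Fin n) (Fin n) ℝ :=
  Matrix.diagonal (fun i => M.Λd i ^ (-α)) * M.W ω * Matrix.diagonal (fun i => M.Λd i ^ (-α))

/-- the generalized Laplacian `X = L^{-α} X̃ L^{-α}` -/
def X (α : ℝ) (ω : M.Ω) : Matrix (Fin n) (Fin n) ℝ :=
  Matrix.diagonal (fun i => M.Ld ω i ^ (-α)) * (M.H + M.W ω) *
    Matrix.diagonal (fun i => M.Ld ω i ^ (-α))

/-- `(L/Λ)^a` -/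
def LΛpow (a : ℝ) (ω : M.Ω) : Matrix (Fin n) (Fin n) ℝ :=
  Matrix.diagonal fun i => (M.Ld ω i / M.Λd i) ^ a

/-- `(L−Λ)/Λ` -/
def ELL (ω : M.Ω) : Matrix (Fin n) (Fin n) ℝ :=
  Matrix.diagonal fun i => (M.Ld ω i - M.Λd i) / M.Λd i

/-- `‖V‖_max` -/
def Vmax : ℝ := ⨆ k : {x : ℕ // x ∈ Finset.Icc 1 M.K}, ⨆ i : Fin n, |M.v (k : ℕ) i|

/-- `‖v_k‖_∞` -/
def vinf (k : ℕ) : ℝ := ⨆ i : Fin n, |M.v k i|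

/-- `ψ_n(δ_k)` -/
def ψ (a₀ : ℝ) (k : ℕ) : ℝ :=
  1 / (|M.δ k| * M.β) + xiPar n a₀ / (M.q * M.β ^ 2) + M.Vmax

/-- `𝔐 = max{1, max_i ∑_j Λ_i^{-2α} s_{ij} Λ_j^{-2α}}` -/
def frakM (α : ℝ) : ℝ :=
  max 1 (⨆ i : Fin n, M.Λd i ^ (-(2 * α)) * ∑ j, M.Λd j ^ (-(2 * α)) * M.s i j)

/-- real Stieltjes transform `M_i(x) = ∫ (t−x)⁻¹ dν_i(t)` -/
def Mre (i : Fin n) (x : ℝ) : ℝ := ∫ t, (t - x)⁻¹ ∂(M.ν i)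

/-- complex Stieltjes transform `M_i(z)` -/
def Mc (i : Fin n) (z : ℂ) : ℂ := ∫ t, ((t : ℂ) - z)⁻¹ ∂(M.ν i)

/-- `Υ(x) = diag(M_i(x))` (real argument) -/
def Υ (x : ℝ) : Matrix (Fin n) (Fin n) ℝ := Matrix.diagonal fun i => M.Mre i x

/-- `Υ(z)` (complex argument) -/
def Υc (z : ℂ) : Matrix (Fin n) (Fin n) ℂ := Matrix.diagonal fun i => M.Mc i z

/-- `Υ'(x)`, entrywise derivative -/
def Υd (x : ℝ) : Matrix (Fin n) (Fin n) ℝ := Matrix.diagonal fun i => deriv (M.Mre i) x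

/-- `V₋ₖ`: the spiked eigenvector matrix with the `k`-th column removed -/
def Vm (k : ℕ) : Matrix (Fin n) {x : ℕ // x ∈ (Finset.Icc 1 M.K).erase k} ℝ :=
  Matrix.of fun i j => M.v (j : ℕ) i

/-- `Δ₋ₖ` -/
def Dm (k : ℕ) :
    Matrix {x : ℕ // x ∈ (Finset.Icc 1 M.K).erase k}
      {x : ℕ // x ∈ (Finset.Icc 1 M.K).erase k} ℝ :=
  Matrix.diagonal fun j => M.δ (j : ℕ)

/-- `Δ₋ₖ⁻¹ + V₋ₖᵀ Υ(x) V₋ₖ` -/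
def denom (k : ℕ) (x : ℝ) :
    Matrix {x : ℕ // x ∈ (Finset.Icc 1 M.K).erase k}
      {x : ℕ // x ∈ (Finset.Icc 1 M.K).erase k} ℝ :=
  (M.Dm k)⁻¹ + (M.Vm k)ᵀ * M.Υ x * M.Vm k

/-- `Υ_k(x) = Υ(x) − Υ(x)V₋ₖ(Δ₋ₖ⁻¹+V₋ₖᵀΥ(x)V₋ₖ)⁻¹V₋ₖᵀΥ(x)` -/
def Υk (k : ℕ) (x : ℝ) : Matrix (Fin n) (Fin n) ℝ :=
  M.Υ x - M.Υ x * M.Vm k * (M.denom k x)⁻¹ * (M.Vm k)ᵀ * M.Υ x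

/-- `v_kᵀ Υ_k(x) v_k` -/
def Υkq (k : ℕ) (x : ℝ) : ℝ := M.v k ⬝ᵥ (M.Υk k x).mulVec (M.v k)

/-- the master equation
`1 + δ_k v_kᵀΥ(x)v_k − δ_k v_kᵀΥ(x)V₋ₖ(Δ₋ₖ⁻¹+V₋ₖᵀΥ(x)V₋ₖ)⁻¹V₋ₖᵀΥ(x)v_k` -/
def masterF (k : ℕ) (x : ℝ) : ℝ :=
  1 + M.δ k * (M.v k ⬝ᵥ (M.Υ x).mulVec (M.v k)) -
    M.δ k * (M.v k ⬝ᵥ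
      (M.Υ x * M.Vm k * (M.denom k x)⁻¹ * (M.Vm k)ᵀ * M.Υ x).mulVec (M.v k))

/-- `Ĩ_k` -/
def Itil (ε₀ : ℝ) (k : ℕ) : Set ℝ :=
  {x | |M.δ k| / (1 + ε₀ / 2) ≤ |x| ∧ |x| ≤ (1 + ε₀ / 2) * |M.δ k|}

/-- `‖uᵀV₋ₖ‖` -/
def uVmNorm (k : ℕ) (u : Fin n → ℝ) : ℝ :=
  Real.sqrt (∑ j : {x : ℕ // x ∈ (Finset.Icc 1 M.K).erase k}, (∑ i, u i * M.v (j : ℕ) i) ^ 2)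

/-- `v_kᵀ((L−Λ)/Λ)v_k` -/
def qf1 (k : ℕ) (ω : M.Ω) : ℝ := M.v k ⬝ᵥ (M.ELL ω).mulVec (M.v k)

/-- `v_kᵀ((L−Λ)/Λ)²v_k` -/
def qf2 (k : ℕ) (ω : M.Ω) : ℝ := M.v k ⬝ᵥ (M.ELL ω * M.ELL ω).mulVec (M.v k)

/-- `v_kᵀ((L−Λ)/Λ)W̄v_k` -/
def qf3 (α : ℝ) (k : ℕ) (ω : M.Ω) : ℝ := M.v k ⬝ᵥ (M.ELL ω * M.Wb α ω).mulVec (M.v k)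

/-- `v_kᵀW̄v_k` -/
def qfW (α : ℝ) (k : ℕ) (ω : M.Ω) : ℝ := M.v k ⬝ᵥ (M.Wb α ω).mulVec (M.v k)

/-- `v_kᵀW̄²v_k` -/
def qfW2 (α : ℝ) (k : ℕ) (ω : M.Ω) : ℝ :=
  M.v k ⬝ᵥ (M.Wb α ω * M.Wb α ω).mulVec (M.v k)

/-- `Λ_j` accessed with a (0-based) natural-number index -/
def ΛdN (j : ℕ) : ℝ := if h : j < n then M.Λd ⟨j, h⟩ else 0

/-- `L_j` accessed with a (0-based) natural-number index -/
def LdN (ω : M.Ω) (j : ℕ) : ℝ := if h : j < n then M.Ld ω ⟨j, h⟩ else 0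

/-- entry of `v_k` accessed with a (0-based) natural-number index -/
def vN (k j : ℕ) : ℝ := if h : j < n then M.v k ⟨j, h⟩ else 0

/-- entry of `v̂_k` accessed with a (0-based) natural-number index -/
def vhatN (ω : M.Ω) (k j : ℕ) : ℝ := if h : j < n then M.vhat ω k ⟨j, h⟩ else 0

/-- `s_{jl}` with first index a (0-based) natural number -/
def sN (j : ℕ) (l : Fin n) : ℝ := if h : j < n then M.s ⟨j, h⟩ l else 0

/-- the complexified matrix `W̄ − z (L/Λ)^{2α}` -/
def Amat (α : ℝ) (ω : M.Ω) (z : ℂ) : Matrix (Fin n) (Fin n) ℂ :=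
  (M.Wb α ω).map (fun x : ℝ => (x : ℂ)) - z • (M.LΛpow (2 * α) ω).map (fun x : ℝ => (x : ℂ))

/-- Basic hypotheses of the rescaled model. -/
structure HBase (M : Mdl n) (α C₀ a₀ : ℝ) : Prop where
  hn : 2 ≤ n
  prob : IsProbabilityMeasure M.μ
  hq1 : xiPar n a₀ ^ (3 : ℕ) ≤ M.q
  hq2 : M.q ≤ C₀ * Real.sqrt n
  hτ0 : ∀ i, 0 ≤ M.τ i
  hτ1 : ∀ i, M.τ i ≤ C₀
  hlam0 : ∀ i, 0 ≤ M.lam i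
  hlam1 : ∀ i, M.lam i ≤ C₀ * M.q ^ 2
  hWsym : ∀ ω, (M.W ω)ᵀ = M.W ω
  hWmeas : ∀ i j, Measurable fun ω => M.W ω i j
  hWindep : iIndepFun
    (fun (p : {p : Fin n × Fin n // p.1 ≤ p.2}) => fun ω => M.W ω p.1.1 p.1.2) M.μ
  hWint : ∀ (i j : Fin n) (p : ℕ), (p : ℝ) ≤ xiPar n a₀ →
    Integrable (fun ω => |M.W ω i j| ^ p) M.μ
  hWmean : ∀ i j, ∫ ω, M.W ω i j ∂M.μ = 0
  hWvar : ∀ i j, M.s i j ≤ C₀ / n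
  hWmom : ∀ (i j : Fin n) (p : ℕ), 3 ≤ p → (p : ℝ) ≤ xiPar n a₀ →
    ∫ ω, |M.W ω i j| ^ p ∂M.μ ≤ C₀ ^ p / (n * M.q ^ ((p : ℝ) - 2))
  hHsym : M.Hᵀ = M.H
  hHnn : ∀ i j, 0 ≤ M.H i j
  hK : 1 ≤ M.K
  hrank : M.H.rank = M.K
  hθ : ∀ i, M.θ i ≤ C₀
  hβ : 0 < M.β
  hLpos : ∀ᵐ ω ∂M.μ, ∀ i, 0 < M.Ld ω i

/-- QVE hypotheses. -/
structure HQVE (M : Mdl n) (α : ℝ) : Prop where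
  hνprob : ∀ i, IsProbabilityMeasure (M.ν i)
  hνsupp : ∀ i,
    (M.ν i) (Set.Icc (-(2 * Real.sqrt (M.frakM α))) (2 * Real.sqrt (M.frakM α)))ᶜ = 0
  hQVE : ∀ z : ℂ, 2 * Real.sqrt (M.frakM α) < ‖z‖ → ∀ i,
    (M.Mc i z)⁻¹ = -z - ((M.Λd i ^ (-(2 * α)) : ℝ) : ℂ) *
      ∑ j, ((M.Λd j ^ (-(2 * α)) : ℝ) : ℂ) * (M.s i j : ℂ) * M.Mc j z

/-- Spike hypotheses: population and empirical eigendecompositions. -/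
structure HSpike (M : Mdl n) (α : ℝ) : Prop where
  hK₀1 : 1 ≤ M.K₀
  hK₀2 : M.K₀ ≤ M.K
  hdecomp :
    Matrix.diagonal (fun i => M.Λd i ^ (-α)) * M.H * Matrix.diagonal (fun i => M.Λd i ^ (-α)) =
      ∑ k ∈ Finset.Icc 1 M.K, M.δ k • Matrix.vecMulVec (M.v k) (M.v k)
  hortho : ∀ k ∈ Finset.Icc 1 M.K, ∀ l ∈ Finset.Icc 1 M.K,
    M.v k ⬝ᵥ M.v l = if k = l then 1 else 0
  hδne : ∀ k ∈ Finset.Icc 1 M.K, M.δ k ≠ 0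
  hδmono : ∀ k ∈ Finset.Icc 1 M.K, ∀ l ∈ Finset.Icc 1 M.K, k ≤ l → |M.δ l| ≤ |M.δ k|
  hδzero : ∀ k, M.K < k → M.δ k = 0
  hδhatmeas : ∀ k, Measurable fun ω => M.δhat ω k
  hvhatmeas : ∀ k i, Measurable fun ω => M.vhat ω k i
  hhat : ∀ᵐ ω ∂M.μ,
    (∀ k ∈ Finset.Icc 1 n, (M.X α ω).mulVec (M.vhat ω k) = M.δhat ω k • M.vhat ω k) ∧
    (∀ k ∈ Finset.Icc 1 n, ∀ l ∈ Finset.Icc 1 n,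
      M.vhat ω k ⬝ᵥ M.vhat ω l = if k = l then 1 else 0) ∧
    (∀ k ∈ Finset.Icc 1 n, ∀ l ∈ Finset.Icc 1 n, k ≤ l → |M.δhat ω l| ≤ |M.δhat ω k|)

end Mdl

/-- "with high probability" for a sequence of events. -/
def WHP (Ms : (n : ℕ) → Mdl n) (E : (n : ℕ) → Set (Ms n).Ω) : Prop :=
  ∀ D : ℝ, 0 < D → ∃ N : ℕ, ∀ n, N ≤ n →
    1 - ENNReal.ofReal ((n : ℝ) ^ (-D)) ≤ (Ms n).μ (E n)

/-- The asymptotic setting: a sequence of models satisfying the model hypotheses and the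
asymptotic conditions (i)–(iv). -/
structure Asym (Ms : (n : ℕ) → Mdl n) (α C₀ a₀ ε₀ : ℝ) : Prop where
  hα : 0 < α
  hC₀ : 1 ≤ C₀
  ha₀ : 0 < a₀
  hε₀ : 0 < ε₀
  base : ∀ n, 2 ≤ n → (Ms n).HBase α C₀ a₀
  qve : ∀ n, 2 ≤ n → (Ms n).HQVE α
  spike : ∀ n, 2 ≤ n → (Ms n).HSpike α
  hq : Tendsto (fun n => (Ms n).q / Real.log n ^ (4 : ℕ)) atTop atTop
  hδK₀ : Tendsto (fun n => |(Ms n).δ (Ms n).K₀|) atTop atTop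
  hgap : ∀ n, 2 ≤ n → ∀ k ∈ Finset.Icc 1 (Ms n).K₀,
    (1 + ε₀) * |(Ms n).δ (k + 1)| < |(Ms n).δ k|
  hcond : Tendsto
    (fun n => ((Ms n).K : ℝ) * xiPar n a₀ * (Ms n).ψ a₀ (Ms n).K₀ / (Ms n).q) atTop (nhds 0)

/-- Limit locations: `t_k ∈ Ĩ_k` solves the master equation, for every `1 ≤ k ≤ K₀`. -/
def LimLoc (Ms : (n : ℕ) → Mdl n) (ε₀ : ℝ) (t : (n : ℕ) → ℕ → ℝ) : Prop :=
  ∀ n, 2 ≤ n → ∀ k ∈ Finset.Icc 1 (Ms n).K₀,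
    t n k ∈ (Ms n).Itil ε₀ k ∧ (Ms n).masterF k (t n k) = 0



section Aux
variable {Ω : Type} [MeasurableSpace Ω] {μ : Measure Ω} [IsProbabilityMeasure μ]
variable {ι : Type} [DecidableEq ι] {f : ι → Ω → ℝ}

lemma aux_pointwise (m : ℕ) {a b : ℝ} (ha : 0 ≤ a) (hb : 0 < b) :
    a ^ m ≤ a ^ (m + 1) / b + b ^ m := by
  rcases le_or_gt a b with h | h
  · have h1 : a ^ m ≤ b ^ m := pow_le_pow_left₀ ha h m
    have h2 : 0 ≤ a ^ (m + 1) / b := div_nonneg (pow_nonneg ha _) hb.le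
    linarith
  · have h3 : 0 ≤ b ^ m := pow_nonneg hb.le _
    have h4 : a ^ m ≤ a ^ (m + 1) / b := by
      rw [le_div_iff₀ hb, pow_succ]
      exact mul_le_mul_of_nonneg_left h.le (pow_nonneg ha m)
    linarith

lemma aux_abs_integral (g : Ω → ℝ) : |∫ ω, g ω ∂μ| ≤ ∫ ω, |g ω| ∂μ := by
  simpa [Real.norm_eq_abs] using norm_integral_le_integral_norm (μ := μ) g

lemma aux_int (hindep : iIndepFun f μ)
    (hmeas : ∀ i, Measurable (f i)) (P : ℕ)
    (hint : ∀ i, ∀ t, t ≤ P → Integrable (fun ω => f i ω ^ t) μ) :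
    ∀ s : Finset ι, ∀ j, j ≤ P → Integrable (fun ω => (∑ i ∈ s, f i ω) ^ j) μ := by
  intro s
  induction s using Finset.induction_on with
  | empty =>
      intro j hj
      rcases Nat.eq_zero_or_pos j with rfl | hj0
      · simpa using integrable_const (1 : ℝ)
      · simp [zero_pow hj0.ne']
  | insert _ _ ha IH =>
      rename_i a s
      intro j hj
      have hsum : (∑ i ∈ s, f i) = fun ω => ∑ i ∈ s, f i ω := by
        ext ω; simp
      have hXS : IndepFun (f a) (fun ω => ∑ i ∈ s, f i ω) μ := by
        have h := (hindep.indepFun_finsetSum_of_notMem hmeas ha).symm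
        rwa [hsum] at h
      have hIndep : ∀ m t : ℕ,
          IndepFun (fun ω => f a ω ^ m) (fun ω => (∑ i ∈ s, f i ω) ^ t) μ :=
        fun m t => hXS.comp (measurable_id.pow_const m) (measurable_id.pow_const t)
      have key : (fun ω => (∑ i ∈ insert a s, f i ω) ^ j)
          = fun ω => ∑ m ∈ Finset.range (j + 1),
              f a ω ^ m * (∑ i ∈ s, f i ω) ^ (j - m) * (j.choose m : ℝ) := by
        ext ω
        rw [Finset.sum_insert ha, add_pow]
      rw [key]
      apply integrable_finset_sum
      intro m hm
      exact (((hIndep m (j - m)).integrable_mul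
        (hint a m (le_trans (Finset.mem_range_succ_iff.mp hm) hj))
        (IH (j - m) (le_trans (Nat.sub_le _ _) hj))).mul_const _)

lemma aux_mom (hindep : iIndepFun f μ)
    (hmeas : ∀ i, Measurable (f i)) (A Nr : ℝ) (hA : 1 ≤ A) (hNr : 0 < Nr) (P : ℕ)
    (hint : ∀ i, ∀ t, t ≤ P → Integrable (fun ω => f i ω ^ t) μ)
    (hmean : ∀ i, ∫ ω, f i ω ∂μ = 0)
    (hmom : ∀ i, ∀ t, 2 ≤ t → t ≤ P → ∫ ω, |f i ω| ^ t ∂μ ≤ A ^ t / Nr) :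
    ∀ s : Finset ι, (s.card : ℝ) ≤ Nr → ∀ k, Even k → 2 ≤ k → k ≤ P →
      ∫ ω, (∑ i ∈ s, f i ω) ^ k ∂μ ≤ ((s.card : ℝ) / Nr) * (2 * A * k) ^ k := by
  intro s
  induction s using Finset.induction_on with
  | empty =>
      intro _ k _ hk2 _
      simp [zero_pow (by omega : k ≠ 0)]
  | insert _ _ ha IH =>
      rename_i a s
      intro hcard k hkE hk2 hkP
      have hcard1 : ((insert a s).card : ℝ) = (s.card : ℝ) + 1 := by
        rw [Finset.card_insert_of_notMem ha]; push_cast; ring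
      have hcard' : (s.card : ℝ) ≤ Nr := by rw [hcard1] at hcard; linarith
      set S : Ω → ℝ := fun ω => ∑ i ∈ s, f i ω with hS
      set b : ℝ := 2 * A * k with hbdef
      have hk0 : (2 : ℝ) ≤ (k : ℝ) := by exact_mod_cast hk2
      have hb1 : 1 ≤ b := by nlinarith
      have hb : 0 < b := by linarith
      have hintS : ∀ t, t ≤ P → Integrable (fun ω => S ω ^ t) μ :=
        fun t ht => aux_int hindep hmeas P hint s t ht
      have hintAbs : ∀ t, t ≤ P → Integrable (fun ω => |S ω| ^ t) μ := by
        intro t ht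
        have := (hintS t ht).abs
        simpa [abs_pow] using this
      -- uniform moment bound for S, exponents ≤ k - 2
      have habs : ∀ m, m + 2 ≤ k → ∫ ω, |S ω| ^ m ∂μ ≤ 2 * b ^ m := by
        intro m hm
        rcases Nat.even_or_odd m with hme | hmo
        · rcases Nat.eq_zero_or_pos m with rfl | hm0
          · simp
          · have hm2 : 2 ≤ m := by
              rcases hme with ⟨r, hr⟩; omega
            have h1 : ∫ ω, |S ω| ^ m ∂μ = ∫ ω, S ω ^ m ∂μ := by
              simp [hme.pow_abs]
            rw [h1]
            have h2 := IH hcard' m hme hm2 (by omega)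
            have h3 : (2 * A * (m : ℝ)) ^ m ≤ b ^ m := by
              apply pow_le_pow_left₀ (by positivity)
              have : (m : ℝ) ≤ (k : ℝ) := by exact_mod_cast (by omega : m ≤ k)
              nlinarith
            have h4 : ((s.card : ℝ) / Nr) ≤ 1 := (div_le_one hNr).mpr hcard'
            have h5 : (0:ℝ) ≤ (2 * A * (m:ℝ)) ^ m := by positivity
            have h6 : (0:ℝ) ≤ b ^ m := by positivity
            calc ∫ ω, S ω ^ m ∂μ ≤ ((s.card : ℝ) / Nr) * (2 * A * m) ^ m := h2
              _ ≤ 1 * b ^ m := by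
                  apply mul_le_mul h4 h3 h5 (by norm_num)
              _ ≤ 2 * b ^ m := by linarith
        · have hm1 : m + 1 ≤ P := by omega
          have hEm1 : Even (m + 1) := Odd.add_one hmo
          have h2m1 : 2 ≤ m + 1 := by
            have := hmo.pos
            omega
          have hpt : ∀ ω, |S ω| ^ m ≤ |S ω| ^ (m + 1) / b + b ^ m :=
            fun ω => aux_pointwise m (abs_nonneg _) hb
          have hI : ∫ ω, |S ω| ^ m ∂μ
              ≤ ∫ ω, (|S ω| ^ (m + 1) / b + b ^ m) ∂μ := by
            apply integral_mono (hintAbs m (by omega))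
              (((hintAbs (m + 1) hm1).div_const b).add (integrable_const _))
              hpt
          have hI2 : ∫ ω, (|S ω| ^ (m + 1) / b + b ^ m) ∂μ
              = (∫ ω, |S ω| ^ (m + 1) ∂μ) / b + b ^ m := by
            rw [integral_add ((hintAbs (m + 1) hm1).div_const b) (integrable_const _),
              integral_div, integral_const]
            simp
          have h1 : ∫ ω, |S ω| ^ (m + 1) ∂μ = ∫ ω, S ω ^ (m + 1) ∂μ := by
            simp [hEm1.pow_abs]
          have h2 := IH hcard' (m + 1) hEm1 h2m1 hm1
          have h3 : (2 * A * ((m : ℝ) + 1)) ^ (m + 1) ≤ b ^ (m + 1) := by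
            apply pow_le_pow_left₀ (by positivity)
            have : ((m : ℝ) + 1) ≤ (k : ℝ) := by exact_mod_cast (by omega : m + 1 ≤ k)
            nlinarith
          have h4 : ((s.card : ℝ) / Nr) ≤ 1 := (div_le_one hNr).mpr hcard'
          have h5 : ∫ ω, |S ω| ^ (m + 1) ∂μ ≤ b ^ (m + 1) := by
            rw [h1]
            calc ∫ ω, S ω ^ (m + 1) ∂μ
                ≤ ((s.card : ℝ) / Nr) * (2 * A * ((m : ℕ) + 1 : ℕ)) ^ (m + 1) := h2
              _ ≤ 1 * b ^ (m + 1) := by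
                  push_cast
                  apply mul_le_mul h4 h3 (by positivity) (by norm_num)
              _ = b ^ (m + 1) := one_mul _
          have h6 : (∫ ω, |S ω| ^ (m + 1) ∂μ) / b ≤ b ^ m := by
            rw [div_le_iff₀ hb, ← pow_succ]
            exact h5
          linarith
      -- independence setup
      have hsum : (∑ i ∈ s, f i) = S := by ext ω; simp [hS]
      have hXS : IndepFun (f a) S μ := by
        have h := (hindep.indepFun_finsetSum_of_notMem hmeas ha).symm
        rwa [hsum] at h
      have hIndep : ∀ m t : ℕ, IndepFun (fun ω => f a ω ^ m) (fun ω => S ω ^ t) μ :=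
        fun m t => hXS.comp (measurable_id.pow_const m) (measurable_id.pow_const t)
      -- expansion
      have expand : ∫ ω, (∑ i ∈ insert a s, f i ω) ^ k ∂μ
          = ∑ m ∈ Finset.range (k + 1),
              (∫ ω, f a ω ^ m ∂μ) * (∫ ω, S ω ^ (k - m) ∂μ) * (k.choose m : ℝ) := by
        have key : (fun ω => (∑ i ∈ insert a s, f i ω) ^ k)
            = fun ω => ∑ m ∈ Finset.range (k + 1),
                f a ω ^ m * S ω ^ (k - m) * (k.choose m : ℝ) := by
          ext ω
          rw [Finset.sum_insert ha, add_pow]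
        have hterm_int : ∀ m ∈ Finset.range (k + 1),
            Integrable (fun ω => f a ω ^ m * S ω ^ (k - m) * (k.choose m : ℝ)) μ := by
          intro m hm
          exact ((hIndep m (k - m)).integrable_mul
            (hint a m (le_trans (Finset.mem_range_succ_iff.mp hm) hkP))
            (hintS (k - m) (le_trans (Nat.sub_le _ _) hkP))).mul_const _
        rw [key, integral_finset_sum _ hterm_int]
        refine Finset.sum_congr rfl fun m hm => ?_
        rw [integral_mul_const]
        congr 1
        exact (hIndep m (k - m)).integral_fun_mul_eq_mul_integral
          (hint a m (le_trans (Finset.mem_range_succ_iff.mp hm) hkP)).aestronglyMeasurable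
          (hintS (k - m) (le_trans (Nat.sub_le _ _) hkP)).aestronglyMeasurable
      rw [expand, Finset.range_eq_Ico,
        Finset.sum_eq_sum_Ico_succ_bot (by omega : 0 < k + 1),
        Finset.sum_eq_sum_Ico_succ_bot (by omega : 1 < k + 1)]
      have h0 : (∫ ω, f a ω ^ 0 ∂μ) * (∫ ω, S ω ^ (k - 0) ∂μ) * (k.choose 0 : ℝ)
          = ∫ ω, S ω ^ k ∂μ := by
        simp
      have h1 : (∫ ω, f a ω ^ 1 ∂μ) * (∫ ω, S ω ^ (k - 1) ∂μ) * (k.choose 1 : ℝ) = 0 := by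
        simp [hmean a]
      have hrest : ∑ m ∈ Finset.Ico 2 (k + 1),
          (∫ ω, f a ω ^ m ∂μ) * (∫ ω, S ω ^ (k - m) ∂μ) * (k.choose m : ℝ)
          ≤ b ^ k / Nr := by
        have hterm : ∀ m ∈ Finset.Ico 2 (k + 1),
            (∫ ω, f a ω ^ m ∂μ) * (∫ ω, S ω ^ (k - m) ∂μ) * (k.choose m : ℝ)
            ≤ b ^ k / Nr * (1 / 2 : ℝ) ^ (m - 1) := by
          intro m hm
          rw [Finset.mem_Ico] at hm
          obtain ⟨hm2, hmk⟩ := hm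
          have hmk' : m ≤ k := by omega
          have hXb : |∫ ω, f a ω ^ m ∂μ| ≤ A ^ m / Nr := by
            calc |∫ ω, f a ω ^ m ∂μ| ≤ ∫ ω, |f a ω ^ m| ∂μ :=
                aux_abs_integral _
              _ = ∫ ω, |f a ω| ^ m ∂μ := by simp [abs_pow]
              _ ≤ A ^ m / Nr := hmom a m hm2 (by omega)
          have hSb : |∫ ω, S ω ^ (k - m) ∂μ| ≤ 2 * b ^ (k - m) := by
            calc |∫ ω, S ω ^ (k - m) ∂μ| ≤ ∫ ω, |S ω ^ (k - m)| ∂μ :=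
                aux_abs_integral _
              _ = ∫ ω, |S ω| ^ (k - m) ∂μ := by simp [abs_pow]
              _ ≤ 2 * b ^ (k - m) := habs (k - m) (by omega)
          have hCb : (k.choose m : ℝ) ≤ (k : ℝ) ^ m := by
            exact_mod_cast Nat.choose_le_pow k m
          have habsle : (∫ ω, f a ω ^ m ∂μ) * (∫ ω, S ω ^ (k - m) ∂μ) * (k.choose m : ℝ)
              ≤ (A ^ m / Nr) * (2 * b ^ (k - m)) * ((k : ℝ) ^ m) := by
            calc (∫ ω, f a ω ^ m ∂μ) * (∫ ω, S ω ^ (k - m) ∂μ) * (k.choose m : ℝ)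
                ≤ |(∫ ω, f a ω ^ m ∂μ) * (∫ ω, S ω ^ (k - m) ∂μ) * (k.choose m : ℝ)| :=
                  le_abs_self _
              _ = |∫ ω, f a ω ^ m ∂μ| * |∫ ω, S ω ^ (k - m) ∂μ| * (k.choose m : ℝ) := by
                  rw [abs_mul, abs_mul, Nat.abs_cast]
              _ ≤ (A ^ m / Nr) * (2 * b ^ (k - m)) * ((k : ℝ) ^ m) := by
                  apply mul_le_mul _ hCb (Nat.cast_nonneg _) (by positivity)
                  apply mul_le_mul hXb hSb (abs_nonneg _) (by positivity)
          refine habsle.trans ?_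
          apply le_of_eq
          obtain ⟨t, rfl⟩ : ∃ t, k = m + t := ⟨k - m, by omega⟩
          obtain ⟨u, rfl⟩ : ∃ u, m = u + 2 := ⟨m - 2, by omega⟩
          have e1 : u + 2 + t - (u + 2) = t := by omega
          have e2 : u + 2 - 1 = u + 1 := by omega
          rw [e1, e2]
          have hsplit : b ^ (u + 2 + t)
              = 2 ^ (u + 2) * A ^ (u + 2) * ((u + 2 + t : ℕ) : ℝ) ^ (u + 2) * b ^ t := by
            rw [pow_add, hbdef, mul_pow, mul_pow]
          rw [hsplit, div_pow, one_pow]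
          have h2pos : (0:ℝ) < 2 ^ (u + 1) := by positivity
          field_simp
          ring
        calc ∑ m ∈ Finset.Ico 2 (k + 1),
              (∫ ω, f a ω ^ m ∂μ) * (∫ ω, S ω ^ (k - m) ∂μ) * (k.choose m : ℝ)
            ≤ ∑ m ∈ Finset.Ico 2 (k + 1), b ^ k / Nr * (1 / 2 : ℝ) ^ (m - 1) :=
              Finset.sum_le_sum hterm
          _ = b ^ k / Nr * ∑ m ∈ Finset.Ico 2 (k + 1), (1 / 2 : ℝ) ^ (m - 1) := by
              rw [Finset.mul_sum]
          _ ≤ b ^ k / Nr * 1 := by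
              apply mul_le_mul_of_nonneg_left _ (by positivity)
              rw [Finset.sum_Ico_eq_sum_range]
              have : ∀ i ∈ Finset.range (k + 1 - 2), (1 / 2 : ℝ) ^ (2 + i - 1)
                  = (1 / 2 : ℝ) * (1 / 2 : ℝ) ^ i := by
                intro i _
                have : 2 + i - 1 = i + 1 := by omega
                rw [this, pow_succ]
                ring
              rw [Finset.sum_congr rfl this, ← Finset.mul_sum]
              have hgeo : ∑ i ∈ Finset.range (k + 1 - 2), (1 / 2 : ℝ) ^ i ≤ 2 :=
                sum_geometric_two_le _
              linarith
          _ = b ^ k / Nr := mul_one _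
      have hIH := IH hcard' k hkE hk2 hkP
      have hbk : (0:ℝ) ≤ b ^ k := by positivity
      rw [h0, h1]
      rw [hcard1]
      have : ((s.card : ℝ) + 1) / Nr * b ^ k = (s.card : ℝ) / Nr * b ^ k + b ^ k / Nr := by
        field_simp
      rw [this]
      linarith
end Aux

set_option maxHeartbeats 1600000 in
/-- concentration of the regularized degree matrix. -/
theorem stmt_10 (C₀ : ℝ) (hC₀ : 1 ≤ C₀) :
    ∃ C₁ c₁ : ℝ, 0 < C₁ ∧ 0 < c₁ ∧
      ∀ α a₀ : ℝ, 0 < α → 0 < a₀ → ∃ N : ℕ,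
        ∀ n : ℕ, 2 ≤ n → ∀ M : Mdl n, M.HBase α C₀ a₀ →
          ((∀ i, M.Λd i = (M.θ i + M.τ i * M.θbar + M.lam i / M.q ^ 2) / M.β ∧
              1 ≤ M.Λd i ∧ M.Λd i ≤ C₁ / M.β) ∧
            (N ≤ n →
              1 - ENNReal.ofReal (Real.exp (-(c₁ * xiPar n a₀))) ≤
                M.μ {ω | ∀ i, |M.Ld ω i - M.Λd i| ≤ C₁ * xiPar n a₀ / (M.q * M.β)})) := by
  classical
  refine ⟨11 * C₀ ^ 2, 1 / 2, by nlinarith, by norm_num, ?_⟩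
  intro α a₀ hα ha₀
  -- choose N
  have h1 : Tendsto (fun n : ℕ => Real.log n) atTop atTop :=
    Real.tendsto_log_atTop.comp tendsto_natCast_atTop_atTop
  have h2 : ∀ᶠ x : ℝ in atTop, 1 ≤ x ∧ 6 ≤ x ^ a₀ :=
    (eventually_ge_atTop 1).and ((tendsto_rpow_atTop ha₀).eventually_ge_atTop 6)
  have h3 := h1.eventually h2
  rw [Filter.eventually_atTop] at h3
  obtain ⟨N, hN⟩ := h3
  have hNfact : ∀ n : ℕ, N ≤ n → (4 : ℝ) ≤ xiPar n a₀ ∧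
      Real.log n + 2 ≤ xiPar n a₀ / 2 := by
    intro n hn
    obtain ⟨hx1, hx6⟩ := hN n hn
    have hx0 : (0 : ℝ) < Real.log n := lt_of_lt_of_le one_pos hx1
    have hxi : xiPar n a₀ = Real.log n * Real.log n ^ a₀ := by
      rw [xiPar, Real.rpow_add hx0, Real.rpow_one]
    have hprod2 : 6 * Real.log n ≤ Real.log n * Real.log n ^ a₀ := by nlinarith
    constructor
    · rw [hxi]; nlinarith
    · rw [hxi]; nlinarith
  refine ⟨N, ?_⟩
  intro n hn2 M hB
  haveI : IsProbabilityMeasure M.μ := hB.prob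
  have hn1R : (1 : ℝ) < (n : ℝ) := by exact_mod_cast lt_of_lt_of_le one_lt_two hn2
  have hnpos : (0 : ℝ) < (n : ℝ) := by linarith
  have hlogpos : 0 < Real.log n := Real.log_pos hn1R
  have hξpos : 0 < xiPar n a₀ := Real.rpow_pos_of_pos hlogpos _
  have hq0 : 0 < M.q := lt_of_lt_of_le (by positivity) hB.hq1
  have hβ : 0 < M.β := hB.hβ
  have hβ' : M.β ≠ 0 := hβ.ne'
  have hq0' : M.q ≠ 0 := hq0.ne'
  have hθnn : ∀ i, 0 ≤ M.θ i := fun i =>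
    div_nonneg (Finset.sum_nonneg fun j _ => hB.hHnn i j) hq0.le
  have hθbar0 : 0 ≤ M.θbar :=
    div_nonneg (Finset.sum_nonneg fun i _ => hθnn i) hnpos.le
  have hθbar1 : M.θbar ≤ C₀ := by
    rw [Mdl.θbar, div_le_iff₀ hnpos]
    calc ∑ i, M.θ i ≤ ∑ i2 : Fin n, C₀ := Finset.sum_le_sum fun i _ => hB.hθ i
      _ = C₀ * n := by simp [mul_comm]
  have hnum_ub : ∀ i, M.θ i + M.τ i * M.θbar + M.lam i / M.q ^ 2 ≤ 11 * C₀ ^ 2 := by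
    intro i
    have ht1 : M.θ i ≤ C₀ := hB.hθ i
    have ht2 : M.τ i * M.θbar ≤ C₀ * C₀ :=
      mul_le_mul (hB.hτ1 i) hθbar1 hθbar0 (by linarith)
    have ht3 : M.lam i / M.q ^ 2 ≤ C₀ := by
      rw [div_le_iff₀ (by positivity)]
      exact hB.hlam1 i
    nlinarith
  have hnum_lb : ∀ i, M.β ≤ M.θ i + M.τ i * M.θbar + M.lam i / M.q ^ 2 := fun i =>
    ciInf_le ((Set.finite_range _).bddBelow) i
  constructor
  · -- part (a)
    intro i
    refine ⟨rfl, ?_, ?_⟩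
    · rw [Mdl.Λd, le_div_iff₀ hβ, one_mul]
      exact hnum_lb i
    · rw [Mdl.Λd, div_le_div_iff_of_pos_right hβ]
      exact hnum_ub i
  · -- part (b)
    intro hNn
    obtain ⟨hξ4, hlogξ⟩ := hNfact n hNn
    have hq1 : 1 ≤ M.q := le_trans (one_le_pow₀ (by linarith)) hB.hq1
    -- even exponent p
    set p : ℕ := 2 * (⌊xiPar n a₀⌋₊ / 2) with hpdef
    have hm4 : 4 ≤ ⌊xiPar n a₀⌋₊ := Nat.le_floor (by exact_mod_cast hξ4)
    have hp2 : 2 ≤ p := by omega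
    have hpE : Even p := even_two_mul _
    have hpξ : (p : ℝ) ≤ xiPar n a₀ := by
      have h1 : p ≤ ⌊xiPar n a₀⌋₊ := by omega
      calc (p : ℝ) ≤ (⌊xiPar n a₀⌋₊ : ℝ) := by exact_mod_cast h1
        _ ≤ xiPar n a₀ := Nat.floor_le (by linarith)
    have hξp2 : xiPar n a₀ ≤ (p : ℝ) + 2 := by
      have h1 : ⌊xiPar n a₀⌋₊ ≤ p + 1 := by omega
      have h2 : xiPar n a₀ < (⌊xiPar n a₀⌋₊ : ℝ) + 1 := Nat.lt_floor_add_one _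
      have h3 : ((⌊xiPar n a₀⌋₊ : ℕ) : ℝ) ≤ (p : ℝ) + 1 := by exact_mod_cast h1
      linarith
    -- the independent family indexed by ordered pairs
    have hindep : iIndepFun
        (fun (pr : {pr : Fin n × Fin n // pr.1 ≤ pr.2}) => fun ω => M.W ω pr.1.1 pr.1.2)
        M.μ := hB.hWindep
    set F : {pr : Fin n × Fin n // pr.1 ≤ pr.2} → M.Ω → ℝ :=
      fun pr ω => M.W ω pr.1.1 pr.1.2 with hFdef
    have hFmeas : ∀ pr, Measurable (F pr) := fun pr => hB.hWmeas _ _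
    have hFint : ∀ pr t, t ≤ p → Integrable (fun ω => F pr ω ^ t) M.μ := by
      intro pr t ht
      have h := hB.hWint pr.1.1 pr.1.2 t (le_trans (by exact_mod_cast ht) hpξ)
      exact h.mono' ((hB.hWmeas _ _).pow_const t).aestronglyMeasurable
        (ae_of_all _ fun ω => by simp [Real.norm_eq_abs, abs_pow, hFdef])
    have hFmean : ∀ pr, ∫ ω, F pr ω ∂M.μ = 0 := fun pr => hB.hWmean _ _
    have hFmom : ∀ pr t, 2 ≤ t → t ≤ p →
        ∫ ω, |F pr ω| ^ t ∂M.μ ≤ C₀ ^ t / n := by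
      intro pr t h2t htp
      rcases eq_or_lt_of_le h2t with h2t' | h3t
      · have he : ∫ ω, |F pr ω| ^ t ∂M.μ = M.s pr.1.1 pr.1.2 := by
          rw [← h2t']
          simp [Mdl.s, sq_abs, hFdef]
        rw [he]
        calc M.s pr.1.1 pr.1.2 ≤ C₀ / n := hB.hWvar _ _
          _ ≤ C₀ ^ t / n := by
            gcongr
            exact le_self_pow₀ hC₀ (by omega)
      · have := hB.hWmom pr.1.1 pr.1.2 t h3t (le_trans (by exact_mod_cast htp) hpξ)
        refine this.trans ?_
        have hqr : 1 ≤ M.q ^ ((t : ℝ) - 2) := by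
          rw [show (1 : ℝ) = 1 ^ ((t : ℝ) - 2) from (Real.one_rpow _).symm]
          apply Real.rpow_le_rpow (by norm_num) hq1
          have : (2 : ℝ) ≤ (t : ℝ) := by exact_mod_cast h2t
          linarith
        apply div_le_div_of_nonneg_left (by positivity) hnpos
        nlinarith
    -- per-row sums and Markov bound
    set T : ℝ := 2 * Real.exp 1 * C₀ * xiPar n a₀ with hTdef
    have hepos : (0 : ℝ) < Real.exp 1 := Real.exp_pos 1
    have hT : 0 < T := by
      rw [hTdef]; positivity
    have hrow : ∀ i : Fin n,
        M.μ {ω | T < |∑ j, M.W ω i j|} ≤ ENNReal.ofReal (Real.exp (2 - xiPar n a₀)) := by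
      intro i
      set pidx : Fin n → {pr : Fin n × Fin n // pr.1 ≤ pr.2} :=
        fun j => if h : i ≤ j then ⟨(i, j), h⟩ else ⟨(j, i), le_of_not_ge h⟩ with hpidx
      have hpinj : Function.Injective pidx := by
        intro x y hxy
        rw [hpidx] at hxy
        by_cases hx : i ≤ x <;> by_cases hy : i ≤ y <;>
          simp only [hx, hy, dif_pos, dif_neg, not_false_iff, Subtype.mk_eq_mk,
            Prod.mk.injEq] at hxy
        all_goals first
          | exact hxy
          | exact hxy.2
          | exact hxy.1
          | exact hxy.2.trans hxy.1
          | exact hxy.1.trans hxy.2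
      set si : Finset {pr : Fin n × Fin n // pr.1 ≤ pr.2} :=
        Finset.univ.image pidx with hsidef
      have hcard : si.card = n := by
        rw [hsidef, Finset.card_image_of_injective _ hpinj, Finset.card_univ,
          Fintype.card_fin]
      have hSsum : ∀ ω, ∑ pr ∈ si, F pr ω = ∑ j, M.W ω i j := by
        intro ω
        rw [hsidef, Finset.sum_image (fun x _ y _ h => hpinj h)]
        refine Finset.sum_congr rfl fun j _ => ?_
        by_cases h : i ≤ j
        · simp [hpidx, h, hFdef]
        · have hw : M.W ω j i = M.W ω i j := by
            calc M.W ω j i = (M.W ω)ᵀ i j := (Matrix.transpose_apply _ _ _).symm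
              _ = M.W ω i j := by rw [hB.hWsym ω]
          simp [hpidx, h, hFdef, hw]
      have hmomS := aux_mom hindep hFmeas C₀ (n : ℝ) hC₀ hnpos p hFint hFmean hFmom
        si (by rw [hcard]) p hpE hp2 le_rfl
      rw [hcard] at hmomS
      have hmomS' : ∫ ω, (∑ j, M.W ω i j) ^ p ∂M.μ ≤ (2 * C₀ * p) ^ p := by
        have he : (fun ω => (∑ pr ∈ si, F pr ω) ^ p)
            = fun ω => (∑ j, M.W ω i j) ^ p := funext fun ω => by rw [hSsum ω]
        rw [he] at hmomS
        calc ∫ ω, (∑ j, M.W ω i j) ^ p ∂M.μ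
            ≤ ((n : ℝ) / n) * (2 * C₀ * p) ^ p := hmomS
          _ = (2 * C₀ * p) ^ p := by rw [div_self hnpos.ne', one_mul]
      have hIntS : Integrable (fun ω => (∑ pr ∈ si, F pr ω) ^ p) M.μ :=
        aux_int hindep hFmeas p hFint si p le_rfl
      have hIntAbs : Integrable (fun ω => |∑ j, M.W ω i j| ^ p) M.μ := by
        have h := hIntS.abs
        have he : (fun ω => |(∑ pr ∈ si, F pr ω) ^ p|)
            = fun ω => |∑ j, M.W ω i j| ^ p := funext fun ω => by
          rw [hSsum ω, abs_pow]
        rwa [he] at h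
      have hAbsInt : ∫ ω, |∑ j, M.W ω i j| ^ p ∂M.μ ≤ (2 * C₀ * p) ^ p := by
        have he : (fun ω => |∑ j, M.W ω i j| ^ p)
            = fun ω => (∑ j, M.W ω i j) ^ p := funext fun ω => hpE.pow_abs _
        rw [he]
        exact hmomS'
      have hmark := mul_meas_ge_le_integral_of_nonneg
        (ae_of_all _ fun ω => by positivity : 0 ≤ᵐ[M.μ] fun ω => |∑ j, M.W ω i j| ^ p)
        hIntAbs (T ^ p)
      have hsub : {ω | T < |∑ j, M.W ω i j|}
          ⊆ {ω | T ^ p ≤ |∑ j, M.W ω i j| ^ p} := by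
        intro ω hω
        exact pow_le_pow_left₀ hT.le (le_of_lt hω) p
      have hTp : (0 : ℝ) < T ^ p := pow_pos hT p
      have h1 : (M.μ {ω | T ^ p ≤ |∑ j, M.W ω i j| ^ p}).toReal
          ≤ (2 * C₀ * p) ^ p / T ^ p := by
        rw [le_div_iff₀ hTp]
        calc (M.μ {ω | T ^ p ≤ |∑ j, M.W ω i j| ^ p}).toReal * T ^ p
            = T ^ p * (M.μ {ω | T ^ p ≤ |∑ j, M.W ω i j| ^ p}).toReal := by ring
          _ ≤ ∫ ω, |∑ j, M.W ω i j| ^ p ∂M.μ := hmark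
          _ ≤ (2 * C₀ * p) ^ p := hAbsInt
      have h2 : (M.μ {ω | T < |∑ j, M.W ω i j|}).toReal
          ≤ (2 * C₀ * p) ^ p / T ^ p :=
        le_trans (ENNReal.toReal_mono (measure_ne_top _ _) (measure_mono hsub)) h1
      have h3 : (2 * C₀ * p) ^ p / T ^ p ≤ Real.exp (2 - xiPar n a₀) := by
        rw [← div_pow]
        have he1 : 2 * C₀ * (p : ℝ) / T = (p : ℝ) / (Real.exp 1 * xiPar n a₀) := by
          rw [hTdef]
          have hC₀0 : C₀ ≠ 0 := by linarith
          field_simp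
        rw [he1]
        have he2 : (p : ℝ) / (Real.exp 1 * xiPar n a₀) ≤ Real.exp (-1) := by
          rw [Real.exp_neg, div_le_iff₀ (by positivity)]
          rw [show (Real.exp 1)⁻¹ * (Real.exp 1 * xiPar n a₀) = xiPar n a₀ by
            field_simp]
          exact hpξ
        calc ((p : ℝ) / (Real.exp 1 * xiPar n a₀)) ^ p ≤ Real.exp (-1) ^ p :=
            pow_le_pow_left₀ (by positivity) he2 p
          _ = Real.exp ((p : ℝ) * (-1)) := (Real.exp_nat_mul _ _).symm
          _ ≤ Real.exp (2 - xiPar n a₀) := by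
            apply Real.exp_le_exp.mpr
            linarith
      refine (ENNReal.le_ofReal_iff_toReal_le (measure_ne_top _ _)
        (Real.exp_nonneg _)).mpr ?_
      exact h2.trans h3
    -- union bound
    set B : Set M.Ω := ⋃ i : Fin n, {ω | T < |∑ j, M.W ω i j|} with hBdef
    have hBle : M.μ B ≤ ENNReal.ofReal (Real.exp (-(1 / 2 * xiPar n a₀))) := by
      calc M.μ B ≤ ∑' i : Fin n, M.μ {ω | T < |∑ j, M.W ω i j|} :=
          measure_iUnion_le _
        _ = ∑ i : Fin n, M.μ {ω | T < |∑ j, M.W ω i j|} := tsum_fintype _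
        _ ≤ ∑ i2 : Fin n, ENNReal.ofReal (Real.exp (2 - xiPar n a₀)) :=
            Finset.sum_le_sum fun i _ => hrow i
        _ = (n : ENNReal) * ENNReal.ofReal (Real.exp (2 - xiPar n a₀)) := by
            rw [Finset.sum_const, Finset.card_univ, Fintype.card_fin, nsmul_eq_mul]
        _ = ENNReal.ofReal ((n : ℝ) * Real.exp (2 - xiPar n a₀)) := by
            rw [ENNReal.ofReal_mul hnpos.le, ENNReal.ofReal_natCast]
        _ ≤ ENNReal.ofReal (Real.exp (-(1 / 2 * xiPar n a₀))) := by
            apply ENNReal.ofReal_le_ofReal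
            rw [show (n : ℝ) = Real.exp (Real.log n) from (Real.exp_log hnpos).symm,
              ← Real.exp_add]
            apply Real.exp_le_exp.mpr
            linarith
    have hsubE : Bᶜ ⊆ {ω | ∀ i, |M.Ld ω i - M.Λd i|
        ≤ 11 * C₀ ^ 2 * xiPar n a₀ / (M.q * M.β)} := by
      intro ω hω
      have hωi : ∀ i : Fin n, |∑ j, M.W ω i j| ≤ T := by
        intro i
        by_contra hcon
        exact hω (Set.mem_iUnion.mpr ⟨i, not_le.mp hcon⟩)
      intro i
      have hd : ∀ j, M.d ω j = M.q * M.θ j + ∑ l, M.W ω j l := by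
        intro j
        rw [Mdl.d, Mdl.θ, Finset.sum_add_distrib]
        congr 1
        field_simp
      have hdb : M.dbar ω = M.q * M.θbar + (∑ j, ∑ l, M.W ω j l) / n := by
        rw [Mdl.dbar, Finset.sum_congr rfl fun j _ => hd j, Finset.sum_add_distrib,
          Mdl.θbar, add_div]
        congr 1
        rw [← Finset.mul_sum]
        ring
      have hdiff : M.Ld ω i - M.Λd i
          = ((∑ l, M.W ω i l) + M.τ i * ((∑ j, ∑ l, M.W ω j l) / n)) / (M.q * M.β) := by
        rw [Mdl.Ld, Mdl.Λd, hd i, hdb]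
        field_simp
        ring
      have hbar : |(∑ j, ∑ l, M.W ω j l) / n| ≤ T := by
        rw [abs_div, abs_of_nonneg hnpos.le, div_le_iff₀ hnpos]
        calc |∑ j, ∑ l, M.W ω j l| ≤ ∑ j, |∑ l, M.W ω j l| :=
            Finset.abs_sum_le_sum_abs _ _
          _ ≤ ∑ j2 : Fin n, T := Finset.sum_le_sum fun j _ => hωi j
          _ = T * n := by simp [mul_comm]
      have hnum : |(∑ l, M.W ω i l) + M.τ i * ((∑ j, ∑ l, M.W ω j l) / n)|
          ≤ T + C₀ * T := by
        calc |(∑ l, M.W ω i l) + M.τ i * ((∑ j, ∑ l, M.W ω j l) / n)|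
            ≤ |∑ l, M.W ω i l| + |M.τ i * ((∑ j, ∑ l, M.W ω j l) / n)| := abs_add_le _ _
          _ ≤ T + C₀ * T := by
              apply add_le_add (hωi i)
              rw [abs_mul, abs_of_nonneg (hB.hτ0 i)]
              exact mul_le_mul (hB.hτ1 i) hbar (abs_nonneg _) (by linarith)
      rw [hdiff, abs_div, abs_of_pos (by positivity : 0 < M.q * M.β)]
      apply div_le_div_of_nonneg_right ?G1 ?G2
      case G2 => positivity
      case G1 =>
        refine hnum.trans ?_
        have he : Real.exp 1 < 2.7182818286 := Real.exp_one_lt_d9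
        have hC2 : C₀ ≤ C₀ ^ 2 := by nlinarith
        have hco : 2 * Real.exp 1 * C₀ * (1 + C₀) ≤ 11 * C₀ ^ 2 := by
          have hfin : 2 * Real.exp 1 * C₀ * (1 + C₀)
              = 2 * Real.exp 1 * (C₀ + C₀ ^ 2) := by ring
          rw [hfin]
          have h2 : 2 * Real.exp 1 * (C₀ + C₀ ^ 2)
              ≤ 2 * 2.7182818286 * (2 * C₀ ^ 2) := by
            apply mul_le_mul (by linarith) (by nlinarith) (by positivity) (by norm_num)
          nlinarith [sq_nonneg C₀]
        calc T + C₀ * T = 2 * Real.exp 1 * C₀ * (1 + C₀) * xiPar n a₀ := by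
              rw [hTdef]; ring
          _ ≤ 11 * C₀ ^ 2 * xiPar n a₀ := mul_le_mul_of_nonneg_right hco hξpos.le
    -- conclusion
    rw [tsub_le_iff_right]
    calc (1 : ENNReal) = M.μ Set.univ := (measure_univ).symm
      _ ≤ M.μ ({ω | ∀ i, |M.Ld ω i - M.Λd i|
            ≤ 11 * C₀ ^ 2 * xiPar n a₀ / (M.q * M.β)} ∪ B) := by
          apply measure_mono
          intro ω _
          by_cases h : ω ∈ B
          · exact Or.inr h
          · exact Or.inl (hsubE h)
      _ ≤ M.μ {ω | ∀ i, |M.Ld ω i - M.Λd i|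
            ≤ 11 * C₀ ^ 2 * xiPar n a₀ / (M.q * M.β)} + M.μ B := measure_union_le _ _
      _ ≤ M.μ {ω | ∀ i, |M.Ld ω i - M.Λd i|
            ≤ 11 * C₀ ^ 2 * xiPar n a₀ / (M.q * M.β)}
          + ENNReal.ofReal (Real.exp (-(1 / 2 * xiPar n a₀))) :=
          add_le_add_right hBle _


end
end

section
/- Concentration of powers of the regularized degree matrix (Lemma on L^α versus Λ^α, rescaled form): For each fixed α > 0 there exist constants C₂ > 0 and c₂ > 0, depending only on C₀ and α, such that whenever additionally ξ/(q·β_n) ≤ c₂, then for all sufficiently large n, with probability at least 1 − e^{−c₂ξ}, max_{1≤i≤n} |(L_i^α − Λ_i^α)/Λ_i^α| ≤ C₂·ξ/(q·β_n), where L_i and Λ_i denote the i-th diagonal entries of L and Λ. -/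
open MeasureTheory Matrix Filter ProbabilityTheory

noncomputable section

section Aux

open Finset in
lemma stmt11_iIndepFun_precomp {Ω : Type*} [MeasurableSpace Ω] {μ : MeasureTheory.Measure Ω}
    {I J : Type*} [Nonempty J] {β : Type*} {mβ : MeasurableSpace β}
    {f : I → Ω → β} (hf : iIndepFun (m := fun _ => mβ) f μ)
    {e : J → I} (he : Function.Injective e) :
    iIndepFun (m := fun _ => mβ) (fun j => f (e j)) μ := by
  classical
  have hinv : ∀ j : J, Function.invFun e (e j) = j := fun j =>
    Function.leftInverse_invFun he j
  rw [iIndepFun_iff_measure_inter_preimage_eq_mul] at hf ⊢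
  intro S sets hsets
  have h := hf (S.image e) (sets := fun i => sets (Function.invFun e i)) ?_
  · rw [Finset.prod_image (fun a _ b _ h => he h)] at h
    have h2 : (⋂ i ∈ S.image e, f i ⁻¹' sets (Function.invFun e i)) =
        ⋂ i ∈ S, f (e i) ⁻¹' sets i := by
      ext ω
      simp only [Set.mem_iInter, Finset.mem_image]
      constructor
      · intro h j hj
        have := h (e j) ⟨j, hj, rfl⟩
        simpa [hinv] using this
      · rintro h i ⟨j, hj, rfl⟩
        simpa [hinv] using h j hj
    rw [h2] at h
    rw [h]
    exact Finset.prod_congr rfl fun j hj => by rw [hinv]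
  · intro i hi
    obtain ⟨j, hj, rfl⟩ := Finset.mem_image.1 hi
    simpa [hinv] using hsets j hj

open Finset in
lemma stmt11_prod_pow_integrable {Ω : Type*} [MeasurableSpace Ω] {μ : MeasureTheory.Measure Ω}
    [MeasureTheory.IsProbabilityMeasure μ] {n : ℕ} (X : Fin n → Ω → ℝ)
    (hmeas : ∀ j, Measurable (X j))
    (hindep : iIndepFun X μ)
    (c : Fin n → ℕ)
    (hint : ∀ j, MeasureTheory.Integrable (fun ω => |X j ω| ^ c j) μ)
    (S : Finset (Fin n)) :
    MeasureTheory.Integrable (fun ω => ∏ j ∈ S, X j ω ^ c j) μ ∧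
    ∫ ω, ∏ j ∈ S, X j ω ^ c j ∂μ = ∏ j ∈ S, ∫ ω, X j ω ^ c j ∂μ := by
  classical
  have hXint : ∀ j, MeasureTheory.Integrable (fun ω => X j ω ^ c j) μ := fun j => by
    refine (hint j).mono' ((hmeas j).pow_const (c j)).aestronglyMeasurable ?_
    filter_upwards with ω
    simp [abs_pow]
  induction S using Finset.induction with
  | empty => simp [MeasureTheory.integrable_const]
  | insert a s hj ih =>
    have hfam : iIndepFun
        (fun j ω => X j ω ^ c j) μ :=
      hindep.comp (fun j x => x ^ c j) (fun j => measurable_id.pow_const (c j))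
    have hIndep : IndepFun (fun ω => X a ω ^ c a) (fun ω => ∏ j ∈ s, X j ω ^ c j) μ := by
      have h := (hfam.indepFun_finsetProd_of_notMem
        (fun j => (hmeas j).pow_const (c j)) hj).symm
      have hfn : (∏ j ∈ s, fun ω => X j ω ^ c j) = fun ω => ∏ j ∈ s, X j ω ^ c j := by
        ext ω; simp
      rwa [hfn] at h
    have hprodint : MeasureTheory.Integrable (fun ω => ∏ j ∈ s, X j ω ^ c j) μ := ih.1
    have hmul : MeasureTheory.Integrable
        ((fun ω => X a ω ^ c a) * fun ω => ∏ j ∈ s, X j ω ^ c j) μ :=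
      hIndep.integrable_mul (hXint a) hprodint
    have hkey : ∫ ω, X a ω ^ c a * ∏ j ∈ s, X j ω ^ c j ∂μ
        = (∫ ω, X a ω ^ c a ∂μ) * ∫ ω, ∏ j ∈ s, X j ω ^ c j ∂μ :=
      hIndep.integral_mul_eq_mul_integral (hXint a).1 hprodint.1
    constructor
    · refine hmul.congr ?_
      filter_upwards with ω
      simp [Finset.prod_insert hj]
    · simp only [Finset.prod_insert hj]
      rw [hkey, ih.2]

open Finset in
lemma stmt11_count_bound (n p : ℕ) (hn : 1 ≤ n) (hp : 1 ≤ p) :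
    ∑ g : Fin p → Fin n, ((n : ℝ))⁻¹ ^ ((univ : Finset (Fin p)).image g).card
      ≤ (p + 1 : ℝ) ^ (p + 1) := by
  classical
  have hnpos : (0 : ℝ) < n := by exact_mod_cast hn
  have hmaps : ∀ g : Fin p → Fin n, g ∈ (univ : Finset (Fin p → Fin n)) →
      (univ : Finset (Fin p)).image g ∈ (univ : Finset (Fin n)).powerset :=
    fun g _ => Finset.mem_powerset.2 (Finset.subset_univ _)
  rw [← Finset.sum_fiberwise_of_maps_to hmaps
    (fun g => ((n : ℝ))⁻¹ ^ ((univ : Finset (Fin p)).image g).card)]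
  have hinner : ∀ T ∈ (univ : Finset (Fin n)).powerset,
      (∑ g ∈ univ.filter (fun g : Fin p → Fin n => (univ : Finset (Fin p)).image g = T),
        ((n : ℝ))⁻¹ ^ ((univ : Finset (Fin p)).image g).card)
      ≤ if T.card ≤ p then (T.card : ℝ) ^ p * ((n : ℝ))⁻¹ ^ T.card else 0 := by
    intro T _
    have : ∀ g ∈ univ.filter (fun g : Fin p → Fin n => (univ : Finset (Fin p)).image g = T),
        ((n : ℝ))⁻¹ ^ ((univ : Finset (Fin p)).image g).card = ((n : ℝ))⁻¹ ^ T.card := by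
      intro g hg
      rw [(Finset.mem_filter.1 hg).2]
    rw [Finset.sum_congr rfl this, Finset.sum_const, nsmul_eq_mul]
    by_cases hT : T.card ≤ p
    · simp only [hT, if_true]
      have hcard : ((univ.filter
          (fun g : Fin p → Fin n => (univ : Finset (Fin p)).image g = T)).card : ℝ)
          ≤ (T.card : ℝ) ^ p := by
        have hsub : univ.filter (fun g : Fin p → Fin n => (univ : Finset (Fin p)).image g = T)
            ⊆ Fintype.piFinset (fun _ : Fin p => T) := by
          intro g hg
          rw [Fintype.mem_piFinset]
          intro m
          rw [← (Finset.mem_filter.1 hg).2]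
          exact Finset.mem_image_of_mem g (Finset.mem_univ m)
        have := Finset.card_le_card hsub
        rw [Fintype.card_piFinset] at this
        simp only [Finset.prod_const, Finset.card_univ, Fintype.card_fin] at this
        exact_mod_cast this
      have hpow : (0:ℝ) ≤ ((n : ℝ))⁻¹ ^ T.card := by positivity
      exact mul_le_mul_of_nonneg_right hcard hpow
    · simp only [hT, if_false]
      have : univ.filter (fun g : Fin p → Fin n => (univ : Finset (Fin p)).image g = T) = ∅ := by
        rw [Finset.filter_eq_empty_iff]
        intro g _
        intro hgT
        apply hT
        rw [← hgT]
        calc ((univ : Finset (Fin p)).image g).card ≤ (univ : Finset (Fin p)).card :=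
              Finset.card_image_le
        _ = p := by simp
      rw [this]
      simp
  calc ∑ T ∈ (univ : Finset (Fin n)).powerset,
        (∑ g ∈ univ.filter (fun g : Fin p → Fin n => (univ : Finset (Fin p)).image g = T),
          ((n : ℝ))⁻¹ ^ ((univ : Finset (Fin p)).image g).card)
      ≤ ∑ T ∈ (univ : Finset (Fin n)).powerset,
          (if T.card ≤ p then (T.card : ℝ) ^ p * ((n : ℝ))⁻¹ ^ T.card else 0) :=
        Finset.sum_le_sum hinner
    _ ≤ (p + 1 : ℝ) ^ (p + 1) := by
        rw [← Finset.sum_filter]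
        have hmaps2 : ∀ T ∈ ((univ : Finset (Fin n)).powerset).filter (fun T => T.card ≤ p),
            T.card ∈ Finset.range (p + 1) := by
          intro T hT
          rw [Finset.mem_range]
          exact Nat.lt_succ_of_le (Finset.mem_filter.1 hT).2
        rw [← Finset.sum_fiberwise_of_maps_to hmaps2
          (fun T => (T.card : ℝ) ^ p * ((n : ℝ))⁻¹ ^ T.card)]
        have hinner2 : ∀ m ∈ Finset.range (p + 1),
            (∑ T ∈ (((univ : Finset (Fin n)).powerset).filter
                (fun T => T.card ≤ p)).filter (fun T => T.card = m),
              (T.card : ℝ) ^ p * ((n : ℝ))⁻¹ ^ T.card) ≤ (p : ℝ) ^ p := by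
          intro m hm
          have hconst : ∀ T ∈ (((univ : Finset (Fin n)).powerset).filter
              (fun T => T.card ≤ p)).filter (fun T => T.card = m),
              (T.card : ℝ) ^ p * ((n : ℝ))⁻¹ ^ T.card = (m : ℝ) ^ p * ((n : ℝ))⁻¹ ^ m := by
            intro T hT
            rw [(Finset.mem_filter.1 hT).2]
          rw [Finset.sum_congr rfl hconst, Finset.sum_const, nsmul_eq_mul]
          have hcard2 : ((((univ : Finset (Fin n)).powerset).filter
              (fun T => T.card ≤ p)).filter (fun T => T.card = m)).card ≤ n ^ m := by
            have hsub : (((univ : Finset (Fin n)).powerset).filter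
                (fun T => T.card ≤ p)).filter (fun T => T.card = m)
                ⊆ Finset.powersetCard m (univ : Finset (Fin n)) := by
              intro T hT
              rw [Finset.mem_powersetCard_univ]
              exact (Finset.mem_filter.1 hT).2
            calc _ ≤ (Finset.powersetCard m (univ : Finset (Fin n))).card :=
                  Finset.card_le_card hsub
              _ = n.choose m := by rw [Finset.card_powersetCard]; simp
              _ ≤ n ^ m := Nat.choose_le_pow _ _
          have hm' : (m : ℝ) ≤ (p : ℝ) := by
            exact_mod_cast Nat.lt_succ_iff.1 (Finset.mem_range.1 hm)
          calc ((((univ : Finset (Fin n)).powerset).filter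
                (fun T => T.card ≤ p)).filter (fun T => T.card = m)).card
                  * ((m : ℝ) ^ p * ((n : ℝ))⁻¹ ^ m)
              ≤ (n : ℝ) ^ m * ((m : ℝ) ^ p * ((n : ℝ))⁻¹ ^ m) := by
                apply mul_le_mul_of_nonneg_right
                · exact_mod_cast hcard2
                · positivity
            _ = (m : ℝ) ^ p * ((n : ℝ) ^ m * ((n : ℝ))⁻¹ ^ m) := by ring
            _ = (m : ℝ) ^ p := by
                rw [← mul_pow, mul_inv_cancel₀ (ne_of_gt hnpos), one_pow, mul_one]
            _ ≤ (p : ℝ) ^ p := by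
                apply pow_le_pow_left₀ (by positivity) hm' p
        calc ∑ m ∈ Finset.range (p + 1), _ ≤ ∑ _m ∈ Finset.range (p + 1), (p : ℝ) ^ p :=
              Finset.sum_le_sum hinner2
          _ = (p + 1 : ℝ) * (p : ℝ) ^ p := by
              rw [Finset.sum_const, Finset.card_range, nsmul_eq_mul]; push_cast; ring
          _ ≤ (p + 1 : ℝ) ^ (p + 1) := by
              rw [pow_succ, mul_comm]
              apply mul_le_mul_of_nonneg_right _ (by positivity)
              apply pow_le_pow_left₀ (by positivity)
              linarith

open Finset in
lemma stmt11_moment_bound {Ω : Type*} [MeasurableSpace Ω] {μ : MeasureTheory.Measure Ω}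
    [MeasureTheory.IsProbabilityMeasure μ]
    {n p : ℕ} (hn : 1 ≤ n) (hp : 2 ≤ p) {A q : ℝ} (hA : 1 ≤ A) (hq : 1 ≤ q)
    (X : Fin n → Ω → ℝ)
    (hmeas : ∀ j, Measurable (X j))
    (hindep : iIndepFun X μ)
    (hint : ∀ (j : Fin n) (k : ℕ), k ≤ p → MeasureTheory.Integrable (fun ω => |X j ω| ^ k) μ)
    (hmean : ∀ j, ∫ ω, X j ω ∂μ = 0)
    (hmom : ∀ (j : Fin n) (k : ℕ), 2 ≤ k → k ≤ p →
      ∫ ω, |X j ω| ^ k ∂μ ≤ A ^ k / (n * q ^ (k - 2))) :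
    MeasureTheory.Integrable (fun ω => (∑ j, X j ω) ^ p) μ ∧
    ∫ ω, (∑ j, X j ω) ^ p ∂μ ≤ A ^ p * (p + 1 : ℝ) ^ (p + 1) := by
  classical
  have hnpos : (0 : ℝ) < n := by exact_mod_cast hn
  set c : (Fin p → Fin n) → Fin n → ℕ :=
    fun g j => ((univ : Finset (Fin p)).filter (fun m => g m = j)).card with hc
  have hc_le : ∀ (g : Fin p → Fin n) (j : Fin n), c g j ≤ p := by
    intro g j
    calc c g j ≤ (univ : Finset (Fin p)).card := Finset.card_filter_le _ _
      _ = p := by simp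
  have key : ∀ ω, (∑ j, X j ω) ^ p
      = ∑ g : Fin p → Fin n, ∏ j ∈ (univ : Finset (Fin p)).image g, X j ω ^ c g j := by
    intro ω
    have h1 : (∑ j, X j ω) ^ p = ∏ _m : Fin p, (∑ j, X j ω) := by
      rw [Finset.prod_const]; simp
    rw [h1, Finset.prod_univ_sum]
    rw [Fintype.piFinset_univ]
    refine Finset.sum_congr rfl fun g _ => ?_
    exact Finset.prod_comp (fun j => X j ω) g
  have hterm : ∀ g : Fin p → Fin n,
      MeasureTheory.Integrable
        (fun ω => ∏ j ∈ (univ : Finset (Fin p)).image g, X j ω ^ c g j) μ ∧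
      ∫ ω, ∏ j ∈ (univ : Finset (Fin p)).image g, X j ω ^ c g j ∂μ
        = ∏ j ∈ (univ : Finset (Fin p)).image g, ∫ ω, X j ω ^ c g j ∂μ :=
    fun g => stmt11_prod_pow_integrable X hmeas hindep (c g)
      (fun j => hint j (c g j) (hc_le g j)) _
  have hfun : (fun ω => (∑ j, X j ω) ^ p)
      = fun ω => ∑ g : Fin p → Fin n, ∏ j ∈ (univ : Finset (Fin p)).image g, X j ω ^ c g j :=
    funext key
  have hintg : MeasureTheory.Integrable (fun ω => (∑ j, X j ω) ^ p) μ := by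
    rw [hfun]; exact MeasureTheory.integrable_finset_sum _ fun g _ => (hterm g).1
  refine ⟨hintg, ?_⟩
  rw [hfun, MeasureTheory.integral_finset_sum _ fun g _ => (hterm g).1]
  have hval : ∀ g : Fin p → Fin n,
      ∫ ω, ∏ j ∈ (univ : Finset (Fin p)).image g, X j ω ^ c g j ∂μ
        ≤ A ^ p * ((n : ℝ))⁻¹ ^ ((univ : Finset (Fin p)).image g).card := by
    intro g
    rw [(hterm g).2]
    by_cases hgood : ∀ j ∈ (univ : Finset (Fin p)).image g, 2 ≤ c g j
    · have hsum_c : ∑ j ∈ (univ : Finset (Fin p)).image g, c g j = p := by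
        have := Finset.card_eq_sum_card_image g (univ : Finset (Fin p))
        simp only [Finset.card_univ, Fintype.card_fin] at this
        exact this.symm
      have hfac : ∀ j ∈ (univ : Finset (Fin p)).image g,
          |∫ ω, X j ω ^ c g j ∂μ| ≤ A ^ (c g j) * ((n : ℝ))⁻¹ := by
        intro j hj
        have h1 : |∫ ω, X j ω ^ c g j ∂μ| ≤ ∫ ω, |X j ω| ^ c g j ∂μ := by
          calc |∫ ω, X j ω ^ c g j ∂μ| ≤ ∫ ω, |X j ω ^ c g j| ∂μ := by
                simpa [Real.norm_eq_abs] using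
                  MeasureTheory.norm_integral_le_integral_norm
                    (fun ω => X j ω ^ c g j) (μ := μ)
            _ = ∫ ω, |X j ω| ^ c g j ∂μ := by congr 1; ext ω; rw [abs_pow]
        have h2 : ∫ ω, |X j ω| ^ c g j ∂μ ≤ A ^ c g j / (n * q ^ (c g j - 2)) :=
          hmom j (c g j) (hgood j hj) (hc_le g j)
        have h3 : A ^ c g j / (n * q ^ (c g j - 2)) ≤ A ^ (c g j) * ((n : ℝ))⁻¹ := by
          rw [div_le_iff₀ (by positivity)]
          have hq1 : (1:ℝ) ≤ q ^ (c g j - 2) := one_le_pow₀ hq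
          calc A ^ c g j = A ^ c g j * (n:ℝ)⁻¹ * n * 1 := by field_simp
            _ ≤ A ^ c g j * (n:ℝ)⁻¹ * n * q ^ (c g j - 2) := by
                apply mul_le_mul_of_nonneg_left hq1 (by positivity)
            _ = A ^ c g j * (↑n)⁻¹ * (↑n * q ^ (c g j - 2)) := by ring
        linarith
      calc ∏ j ∈ (univ : Finset (Fin p)).image g, ∫ ω, X j ω ^ c g j ∂μ
          ≤ |∏ j ∈ (univ : Finset (Fin p)).image g, ∫ ω, X j ω ^ c g j ∂μ| := le_abs_self _
        _ = ∏ j ∈ (univ : Finset (Fin p)).image g, |∫ ω, X j ω ^ c g j ∂μ| :=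
            Finset.abs_prod _ _
        _ ≤ ∏ j ∈ (univ : Finset (Fin p)).image g, A ^ (c g j) * ((n : ℝ))⁻¹ :=
            Finset.prod_le_prod (fun j _ => abs_nonneg _) hfac
        _ = (∏ j ∈ (univ : Finset (Fin p)).image g, A ^ (c g j))
              * ((n : ℝ))⁻¹ ^ ((univ : Finset (Fin p)).image g).card := by
            rw [Finset.prod_mul_distrib, Finset.prod_const]
        _ = A ^ p * ((n : ℝ))⁻¹ ^ ((univ : Finset (Fin p)).image g).card := by
            rw [Finset.prod_pow_eq_pow_sum, hsum_c]
    · push_neg at hgood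
      obtain ⟨j, hj, hcj⟩ := hgood
      have hc1 : c g j = 1 := by
        have hpos : 0 < c g j := by
          obtain ⟨m, _, rfl⟩ := Finset.mem_image.1 hj
          apply Finset.card_pos.2
          exact ⟨m, Finset.mem_filter.2 ⟨Finset.mem_univ m, rfl⟩⟩
        omega
      have hzero : ∫ ω, X j ω ^ c g j ∂μ = 0 := by
        rw [hc1]
        simpa using hmean j
      rw [Finset.prod_eq_zero hj hzero]
      positivity
  calc ∑ g : Fin p → Fin n, ∫ ω, ∏ j ∈ (univ : Finset (Fin p)).image g, X j ω ^ c g j ∂μ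
      ≤ ∑ g : Fin p → Fin n, A ^ p * ((n : ℝ))⁻¹ ^ ((univ : Finset (Fin p)).image g).card :=
        Finset.sum_le_sum fun g _ => hval g
    _ = A ^ p * ∑ g : Fin p → Fin n, ((n : ℝ))⁻¹ ^ ((univ : Finset (Fin p)).image g).card := by
        rw [Finset.mul_sum]
    _ ≤ A ^ p * (p + 1 : ℝ) ^ (p + 1) := by
        apply mul_le_mul_of_nonneg_left (stmt11_count_bound n p hn (by omega)) (by positivity)

lemma stmt11_abs_exp_sub_one_le (x : ℝ) : |Real.exp x - 1| ≤ |x| * Real.exp |x| := by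
  rcases le_or_gt 0 x with hx | hx
  · rw [abs_of_nonneg hx, abs_of_nonneg (by linarith [Real.one_le_exp hx])]
    have h := Real.add_one_le_exp (-x)
    have hpos := Real.exp_pos x
    have hinv : Real.exp (-x) * Real.exp x = 1 := by rw [← Real.exp_add]; simp
    nlinarith
  · have hlt : Real.exp x < 1 := by
      rw [← Real.exp_zero]; exact Real.exp_lt_exp.2 hx
    rw [abs_of_neg hx, abs_of_nonpos (by linarith)]
    have h := Real.add_one_le_exp x
    have h2 : (1:ℝ) ≤ Real.exp (-x) := by
      rw [← Real.exp_zero]; exact Real.exp_le_exp.2 (by linarith)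
    nlinarith

lemma stmt11_rpow_ratio_close {r α : ℝ} (hα : 0 < α) (hr : 0 < r) (h : |r - 1| ≤ 1/2) :
    |r ^ α - 1| ≤ 2 * α * Real.exp α * |r - 1| := by
  have hr2 : 1/2 ≤ r := by
    cases abs_le.1 h with | intro h1 h2 => linarith
  have hlog : |Real.log r| ≤ 2 * |r - 1| := by
    rcases le_or_gt 1 r with h1 | h1
    · rw [abs_of_nonneg (Real.log_nonneg h1), abs_of_nonneg (by linarith)]
      have := Real.log_le_sub_one_of_pos hr
      linarith
    · rw [abs_of_nonpos (Real.log_nonpos (by linarith) (le_of_lt h1)),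
        abs_of_nonpos (by linarith)]
      have hinv : Real.log r = - Real.log r⁻¹ := by rw [Real.log_inv]; ring
      have h2 : Real.log r⁻¹ ≤ r⁻¹ - 1 := Real.log_le_sub_one_of_pos (by positivity)
      have h3 : r⁻¹ - 1 ≤ 2 * (1 - r) := by
        have hru : r * r⁻¹ = 1 := mul_inv_cancel₀ (ne_of_gt hr)
        nlinarith [hru, hr2, h1]
      nlinarith [Real.log_inv r]
  have hlog1 : |Real.log r| ≤ 1 := by linarith [abs_le.1 h]
  rw [Real.rpow_def_of_pos hr]
  calc |Real.exp (Real.log r * α) - 1|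
      ≤ |Real.log r * α| * Real.exp |Real.log r * α| := stmt11_abs_exp_sub_one_le _
    _ ≤ (2 * |r - 1| * α) * Real.exp α := by
        have habs : |Real.log r * α| = |Real.log r| * α := by
          rw [abs_mul, abs_of_pos hα]
        rw [habs]
        have h1 : |Real.log r| * α ≤ 2 * |r - 1| * α :=
          mul_le_mul_of_nonneg_right hlog (le_of_lt hα)
        have h2 : Real.exp (|Real.log r| * α) ≤ Real.exp α := by
          apply Real.exp_le_exp.2
          calc |Real.log r| * α ≤ 1 * α := mul_le_mul_of_nonneg_right hlog1 (le_of_lt hα)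
            _ = α := one_mul α
        exact mul_le_mul h1 h2 (le_of_lt (Real.exp_pos _)) (by positivity)
    _ = 2 * α * Real.exp α * |r - 1| := by ring

lemma stmt11_arith {C₀ ξ : ℝ} {n p : ℕ} (hC₀ : 1 ≤ C₀) (hξ : 4 ≤ ξ) (hn3 : 3 ≤ n)
    (hlog : Real.log n + Real.log ξ + 4 ≤ ξ / 3)
    (hp1 : (p : ℝ) ≤ ξ) (hp2 : ξ - 2 ≤ (p : ℝ)) :
    (n : ℝ) * (C₀ ^ p * ((p : ℝ) + 1) ^ (p + 1) / (8 * C₀ * ξ) ^ p) ≤ Real.exp (-ξ) := by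
  have hξ0 : (0:ℝ) < ξ := by linarith
  have hC0 : (0:ℝ) < C₀ := by linarith
  have hn0 : (0:ℝ) < n := by positivity
  have hlog4 : (4:ℝ)/3 ≤ Real.log 4 := by
    have h4 : (4:ℝ) = 2 ^ 2 := by norm_num
    rw [h4, Real.log_pow]
    have := Real.log_two_gt_d9
    push_cast
    nlinarith
  have h4p : Real.exp ((4/3) * (ξ - 2)) ≤ (4:ℝ) ^ p := by
    have h1 : (4/3) * (ξ - 2) ≤ (p : ℝ) * Real.log 4 := by
      have hξ2 : (0:ℝ) ≤ ξ - 2 := by linarith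
      calc (4/3) * (ξ - 2) = (ξ - 2) * (4/3) := by ring
        _ ≤ (p : ℝ) * Real.log 4 :=
          mul_le_mul hp2 hlog4 (by norm_num) (by positivity)
    calc Real.exp ((4/3) * (ξ - 2)) ≤ Real.exp ((p : ℝ) * Real.log 4) :=
          Real.exp_le_exp.2 h1
      _ = Real.exp (Real.log 4) ^ p := by
          rw [← Real.exp_nat_mul]
      _ = (4:ℝ) ^ p := by rw [Real.exp_log (by norm_num)]
  have h2n : 2 * (n:ℝ) * ξ ≤ Real.exp (ξ/3 - 8/3) := by
    have hlog2 : Real.log 2 ≤ 4/3 := by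
      have := Real.log_two_lt_d9; nlinarith
    have : 2 * (n:ℝ) * ξ = Real.exp (Real.log 2 + Real.log n + Real.log ξ) := by
      rw [Real.exp_add, Real.exp_add, Real.exp_log (by norm_num),
        Real.exp_log hn0, Real.exp_log hξ0]
    rw [this]
    apply Real.exp_le_exp.2
    linarith
  have hkey : 2 * (n:ℝ) * ξ ≤ Real.exp (-ξ) * (4:ℝ) ^ p := by
    have hid : Real.exp (ξ/3 - 8/3) = Real.exp (-ξ) * Real.exp ((4/3) * (ξ - 2)) := by
      rw [← Real.exp_add]; congr 1; ring
    calc 2 * (n:ℝ) * ξ ≤ Real.exp (ξ/3 - 8/3) := h2n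
      _ = Real.exp (-ξ) * Real.exp ((4/3) * (ξ - 2)) := hid
      _ ≤ Real.exp (-ξ) * (4:ℝ) ^ p :=
          mul_le_mul_of_nonneg_left h4p (le_of_lt (Real.exp_pos _))
  have hnum : ((p : ℝ) + 1) ^ (p + 1) ≤ 2 ^ (p + 1) * ξ ^ (p + 1) := by
    rw [← mul_pow]
    apply pow_le_pow_left₀ (by positivity)
    linarith
  have hden : (0:ℝ) < (8 * C₀ * ξ) ^ p := by positivity
  rw [mul_div_assoc' , div_le_iff₀ hden]
  have hexp : (8 * C₀ * ξ) ^ p = C₀ ^ p * ξ ^ p * 8 ^ p := by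
    rw [show (8 * C₀ * ξ) = C₀ * ξ * 8 by ring, mul_pow, mul_pow]
  calc (n:ℝ) * (C₀ ^ p * ((p : ℝ) + 1) ^ (p + 1))
      ≤ (n:ℝ) * (C₀ ^ p * (2 ^ (p + 1) * ξ ^ (p + 1))) := by
        apply mul_le_mul_of_nonneg_left _ (le_of_lt hn0)
        exact mul_le_mul_of_nonneg_left hnum (by positivity)
    _ = C₀ ^ p * ξ ^ p * (2 * (n:ℝ) * ξ * 2 ^ p) := by
        rw [pow_succ, pow_succ]; ring
    _ ≤ C₀ ^ p * ξ ^ p * ((Real.exp (-ξ) * (4:ℝ) ^ p) * 2 ^ p) := by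
        apply mul_le_mul_of_nonneg_left _ (by positivity)
        exact mul_le_mul_of_nonneg_right hkey (by positivity)
    _ = Real.exp (-ξ) * (C₀ ^ p * ξ ^ p * 8 ^ p) := by
        rw [show (8:ℝ) ^ p = 4 ^ p * 2 ^ p by rw [← mul_pow]; norm_num]
        ring
    _ = Real.exp (-ξ) * (8 * C₀ * ξ) ^ p := by rw [hexp]

lemma stmt11_eventually (a₀ : ℝ) (ha₀ : 0 < a₀) :
    ∃ N : ℕ, ∀ n : ℕ, N ≤ n → 3 ≤ n ∧ 4 ≤ xiPar n a₀ ∧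
      Real.log n + Real.log (xiPar n a₀) + 4 ≤ xiPar n a₀ / 3 := by
  have htend : Filter.Tendsto (fun n : ℕ => Real.log n) Filter.atTop Filter.atTop :=
    Real.tendsto_log_atTop.comp tendsto_natCast_atTop_atTop
  have hev : ∀ᶠ n : ℕ in Filter.atTop,
      max ((9 + 3 * a₀) ^ (a₀⁻¹)) 12 ≤ Real.log n := htend.eventually_ge_atTop _
  obtain ⟨N, hN⟩ := Filter.eventually_atTop.1 (hev.and (Filter.eventually_ge_atTop 3))
  refine ⟨N, fun n hn => ?_⟩
  obtain ⟨hlogn, hn3⟩ := hN n hn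
  set t := Real.log n with ht
  have ht12 : 12 ≤ t := le_trans (le_max_right _ _) hlogn
  have htR : (9 + 3 * a₀) ^ (a₀⁻¹) ≤ t := le_trans (le_max_left _ _) hlogn
  have ht0 : (0:ℝ) < t := by linarith
  have ht1 : (1:ℝ) ≤ t := by linarith
  have hxi : xiPar n a₀ = t ^ ((1:ℝ) + a₀) := rfl
  have h1 : t ≤ xiPar n a₀ := by
    rw [hxi]
    calc t = t ^ (1:ℝ) := (Real.rpow_one t).symm
      _ ≤ t ^ ((1:ℝ) + a₀) := Real.rpow_le_rpow_of_exponent_le ht1 (by linarith)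
  have hξ4 : 4 ≤ xiPar n a₀ := by linarith
  refine ⟨hn3, hξ4, ?_⟩
  have hlogξ : Real.log (xiPar n a₀) = ((1:ℝ) + a₀) * Real.log t := by
    rw [hxi, Real.log_rpow ht0]
  have hlogt : Real.log t ≤ t := le_trans (Real.log_le_sub_one_of_pos ht0) (by linarith)
  have h9 : (0:ℝ) ≤ 9 + 3 * a₀ := by linarith
  have hta : 9 + 3 * a₀ ≤ t ^ a₀ := by
    calc 9 + 3 * a₀ = ((9 + 3 * a₀) ^ (a₀⁻¹)) ^ a₀ := by
          rw [← Real.rpow_mul h9, inv_mul_cancel₀ (ne_of_gt ha₀), Real.rpow_one]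
      _ ≤ t ^ a₀ := Real.rpow_le_rpow (Real.rpow_nonneg h9 _) htR (le_of_lt ha₀)
  have hsplit : xiPar n a₀ = t * t ^ a₀ := by
    rw [hxi, Real.rpow_add ht0, Real.rpow_one]
  have e1 : ((1:ℝ) + a₀) * Real.log t ≤ (1 + a₀) * t :=
    mul_le_mul_of_nonneg_left hlogt (by linarith)
  have e2 : t * (9 + 3 * a₀) ≤ t * t ^ a₀ :=
    mul_le_mul_of_nonneg_left hta (le_of_lt ht0)
  rw [hlogξ, hsplit]
  linarith

end Aux

open Finset in
lemma stmt11_det {n : ℕ} (M : Mdl n) {α C₀ a₀ : ℝ} (hα : 0 < α) (hC₀ : 1 ≤ C₀)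
    (hb : M.HBase α C₀ a₀) (hn3 : 3 ≤ n) (hξ4 : 4 ≤ xiPar n a₀)
    (hsmall : xiPar n a₀ / (M.q * M.β) ≤ 1 / (32 * C₀ ^ 2))
    (ω : M.Ω) (hL : ∀ i, 0 < M.Ld ω i)
    (hS : ∀ i, |∑ j, M.W ω i j| ≤ 8 * C₀ * xiPar n a₀) :
    ∀ i, |(M.Ld ω i ^ α - M.Λd i ^ α) / M.Λd i ^ α|
      ≤ 32 * α * Real.exp α * C₀ ^ 2 * xiPar n a₀ / (M.q * M.β) := by
  set ξ := xiPar n a₀ with hξdef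
  have hξ0 : (0:ℝ) < ξ := by linarith
  have hq1 : (1:ℝ) ≤ M.q := le_trans (one_le_pow₀ (by linarith : (1:ℝ) ≤ ξ)) hb.hq1
  have hq0 : (0:ℝ) < M.q := by linarith
  have hβ := hb.hβ
  have hqβ : (0:ℝ) < M.q * M.β := mul_pos hq0 hβ
  have hn0 : (0:ℝ) < (n:ℝ) := by positivity
  -- Λd lower bound
  have hΛ : ∀ i, 1 ≤ M.Λd i := by
    intro i
    have hle : M.β ≤ M.θ i + M.τ i * M.θbar + M.lam i / M.q ^ 2 :=
      ciInf_le (Set.Finite.bddBelow (Set.finite_range _)) i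
    have : M.Λd i = (M.θ i + M.τ i * M.θbar + M.lam i / M.q ^ 2) / M.β := rfl
    rw [this]
    rw [le_div_iff₀ hβ, one_mul]
    exact hle
  -- decomposition of Ld - Λd
  have hsumH : ∀ i, ∑ j, M.H i j = M.q * M.θ i := by
    intro i
    have : M.θ i = (∑ j, M.H i j) / M.q := rfl
    rw [this]
    field_simp
  have hd : ∀ i, M.d ω i = M.q * M.θ i + ∑ j, M.W ω i j := by
    intro i
    have : M.d ω i = ∑ j, (M.H i j + M.W ω i j) := rfl
    rw [this, Finset.sum_add_distrib, hsumH i]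
  have hdbar : M.dbar ω = M.q * M.θbar + (∑ j, ∑ l, M.W ω j l) / n := by
    have h1 : M.dbar ω = (∑ j, M.d ω j) / n := rfl
    have h2 : M.θbar = (∑ i, M.θ i) / n := rfl
    rw [h1, Finset.sum_congr rfl (fun j _ => hd j), Finset.sum_add_distrib, ← Finset.mul_sum,
      h2]
    have : ∀ j : Fin n, M.d ω j = M.d ω j := fun _ => rfl
    field_simp
  have hdiffi : ∀ i, M.Ld ω i - M.Λd i
      = (∑ j, M.W ω i j + M.τ i * ((∑ j, ∑ l, M.W ω j l) / n)) / (M.q * M.β) := by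
    intro i
    have hLdef : M.Ld ω i = (M.d ω i + M.τ i * M.dbar ω + M.lam i / M.q) / (M.q * M.β) := rfl
    have hΛdef : M.Λd i = (M.θ i + M.τ i * M.θbar + M.lam i / M.q ^ 2) / M.β := rfl
    rw [hLdef, hΛdef, hd i, hdbar]
    field_simp
    ring
  -- bound on the average
  have hSbar : |(∑ j, ∑ l, M.W ω j l) / n| ≤ 8 * C₀ * ξ := by
    rw [abs_div, abs_of_pos hn0, div_le_iff₀ hn0]
    calc |∑ j, ∑ l, M.W ω j l| ≤ ∑ j, |∑ l, M.W ω j l| :=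
          Finset.abs_sum_le_sum_abs _ _
      _ ≤ ∑ _j : Fin n, 8 * C₀ * ξ := Finset.sum_le_sum fun j _ => hS j
      _ = 8 * C₀ * ξ * n := by rw [Finset.sum_const, nsmul_eq_mul, Finset.card_univ,
            Fintype.card_fin]; ring
  have hdiff_bound : ∀ i, |M.Ld ω i - M.Λd i| ≤ 16 * C₀ ^ 2 * ξ / (M.q * M.β) := by
    intro i
    rw [hdiffi i, abs_div, abs_of_pos hqβ, div_le_div_iff_of_pos_right hqβ]
    calc |∑ j, M.W ω i j + M.τ i * ((∑ j, ∑ l, M.W ω j l) / n)|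
        ≤ |∑ j, M.W ω i j| + |M.τ i * ((∑ j, ∑ l, M.W ω j l) / n)| := abs_add_le _ _
      _ ≤ 8 * C₀ * ξ + C₀ * (8 * C₀ * ξ) := by
          have h1 := hS i
          have h2 : |M.τ i * ((∑ j, ∑ l, M.W ω j l) / n)| ≤ C₀ * (8 * C₀ * ξ) := by
            rw [abs_mul, abs_of_nonneg (hb.hτ0 i)]
            exact mul_le_mul (hb.hτ1 i) hSbar (abs_nonneg _)
              (by linarith)
          linarith
      _ ≤ 16 * C₀ ^ 2 * ξ := by
          nlinarith [mul_nonneg (mul_nonneg (mul_nonneg (by norm_num : (0:ℝ) ≤ 8)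
            (by linarith : (0:ℝ) ≤ C₀)) hξ0.le) (sub_nonneg.2 hC₀)]
  intro i
  have hΛpos : (0:ℝ) < M.Λd i := lt_of_lt_of_le one_pos (hΛ i)
  set r := M.Ld ω i / M.Λd i with hrdef
  have hr : 0 < r := div_pos (hL i) hΛpos
  have hr1 : |r - 1| ≤ 16 * C₀ ^ 2 * ξ / (M.q * M.β) := by
    have : r - 1 = (M.Ld ω i - M.Λd i) / M.Λd i := by
      rw [hrdef]
      field_simp
    rw [this, abs_div, abs_of_pos hΛpos]
    calc |M.Ld ω i - M.Λd i| / M.Λd i ≤ |M.Ld ω i - M.Λd i| :=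
          div_le_self (abs_nonneg _) (hΛ i)
      _ ≤ 16 * C₀ ^ 2 * ξ / (M.q * M.β) := hdiff_bound i
  have hhalf : |r - 1| ≤ 1/2 := by
    have h1 : 16 * C₀ ^ 2 * ξ / (M.q * M.β) = 16 * C₀ ^ 2 * (ξ / (M.q * M.β)) := by ring
    have h2 : 16 * C₀ ^ 2 * (ξ / (M.q * M.β)) ≤ 16 * C₀ ^ 2 * (1 / (32 * C₀ ^ 2)) :=
      mul_le_mul_of_nonneg_left hsmall (by positivity)
    have h3 : 16 * C₀ ^ 2 * (1 / (32 * C₀ ^ 2)) = 1/2 := by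
      field_simp
      ring
    rw [h1] at hr1
    linarith
  have hkey := stmt11_rpow_ratio_close hα hr hhalf
  have hrw : (M.Ld ω i ^ α - M.Λd i ^ α) / M.Λd i ^ α = r ^ α - 1 := by
    have hdivr : r ^ α = M.Ld ω i ^ α / M.Λd i ^ α :=
      Real.div_rpow (le_of_lt (hL i)) (le_of_lt hΛpos) α
    rw [hdivr, sub_div, div_self (ne_of_gt (Real.rpow_pos_of_pos hΛpos α))]
  rw [hrw]
  calc |r ^ α - 1| ≤ 2 * α * Real.exp α * |r - 1| := hkey
    _ ≤ 2 * α * Real.exp α * (16 * C₀ ^ 2 * ξ / (M.q * M.β)) :=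
        mul_le_mul_of_nonneg_left hr1 (by positivity)
    _ = 32 * α * Real.exp α * C₀ ^ 2 * ξ / (M.q * M.β) := by ring

/-- concentration of powers of the regularized degree matrix. -/
theorem stmt_11 (C₀ α : ℝ) (hC₀ : 1 ≤ C₀) (hα : 0 < α) :
    ∃ C₂ c₂ : ℝ, 0 < C₂ ∧ 0 < c₂ ∧
      ∀ a₀ : ℝ, 0 < a₀ → ∃ N : ℕ,
        ∀ n : ℕ, N ≤ n → ∀ M : Mdl n, M.HBase α C₀ a₀ →
          xiPar n a₀ / (M.q * M.β) ≤ c₂ →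
          1 - ENNReal.ofReal (Real.exp (-(c₂ * xiPar n a₀))) ≤
            M.μ {ω | ∀ i,
              |(M.Ld ω i ^ α - M.Λd i ^ α) / M.Λd i ^ α| ≤ C₂ * xiPar n a₀ / (M.q * M.β)} := by
  classical
  refine ⟨32 * α * Real.exp α * C₀ ^ 2, 1 / (32 * C₀ ^ 2), by positivity, by positivity, ?_⟩
  intro a₀ ha₀
  obtain ⟨N, hN⟩ := stmt11_eventually a₀ ha₀
  refine ⟨N, fun n hn M hb hsmall => ?_⟩
  haveI := hb.prob
  obtain ⟨hn3, hξ4, hlogcond⟩ := hN n hn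
  set ξ := xiPar n a₀ with hξdef
  have hξ0 : (0:ℝ) < ξ := by linarith
  have hξ1 : (1:ℝ) ≤ ξ := by linarith
  have hq1 : (1:ℝ) ≤ M.q := le_trans (one_le_pow₀ hξ1) hb.hq1
  have hq0 : (0:ℝ) < M.q := by linarith
  have hβ := hb.hβ
  have hqβ : (0:ℝ) < M.q * M.β := mul_pos hq0 hβ
  have hn1 : 1 ≤ n := by omega
  -- the even moment order
  set p : ℕ := 2 * Nat.floor (ξ / 2) with hpdef
  have hfl2 : (2:ℕ) ≤ Nat.floor (ξ / 2) := by
    apply Nat.le_floor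
    push_cast
    linarith
  have hp2 : 2 ≤ p := by omega
  have hpev : Even p := ⟨Nat.floor (ξ / 2), by omega⟩
  have hpξ : (p : ℝ) ≤ ξ := by
    have := Nat.floor_le (by positivity : (0:ℝ) ≤ ξ / 2)
    rw [hpdef]
    push_cast
    linarith
  have hpl : ξ - 2 ≤ (p : ℝ) := by
    have := Nat.sub_one_lt_floor (ξ / 2)
    rw [hpdef]
    push_cast
    linarith
  -- row independence
  have hrow : ∀ i : Fin n, iIndepFun
      (fun j ω => M.W ω i j) M.μ := by
    intro i
    haveI : Nonempty (Fin n) := ⟨⟨0, by omega⟩⟩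
    set e : Fin n → {pr : Fin n × Fin n // pr.1 ≤ pr.2} := fun j =>
      if h : i ≤ j then ⟨(i, j), h⟩ else ⟨(j, i), le_of_not_ge h⟩ with hedef
    have hinj : Function.Injective e := by
      intro a b hab
      by_cases h1 : i ≤ a <;> by_cases h2 : i ≤ b
      · simp only [hedef, dif_pos h1, dif_pos h2, Subtype.mk.injEq, Prod.mk.injEq] at hab
        exact hab.2
      · simp only [hedef, dif_pos h1, dif_neg h2, Subtype.mk.injEq, Prod.mk.injEq] at hab
        exact absurd hab.1.le h2
      · simp only [hedef, dif_neg h1, dif_pos h2, Subtype.mk.injEq, Prod.mk.injEq] at hab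
        exact absurd hab.1.ge h1
      · simp only [hedef, dif_neg h1, dif_neg h2, Subtype.mk.injEq, Prod.mk.injEq] at hab
        exact hab.1
    have h := stmt11_iIndepFun_precomp hb.hWindep hinj
    have hfeq : (fun j => (fun (pr : {pr : Fin n × Fin n // pr.1 ≤ pr.2}) (ω : M.Ω) =>
        M.W ω pr.1.1 pr.1.2) (e j)) = fun j ω => M.W ω i j := by
      funext j
      by_cases h1 : i ≤ j
      · simp [hedef, h1]
      · funext ω
        simp only [hedef, h1, dif_neg, not_false_iff]
        have hsym := hb.hWsym ω
        calc M.W ω j i = (M.W ω)ᵀ i j := by rw [Matrix.transpose_apply]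
          _ = M.W ω i j := by rw [hsym]
    rwa [hfeq] at h
  -- moment bound per row
  have hmomi : ∀ i : Fin n,
      MeasureTheory.Integrable (fun ω => (∑ j, M.W ω i j) ^ p) M.μ ∧
      ∫ ω, (∑ j, M.W ω i j) ^ p ∂M.μ ≤ C₀ ^ p * ((p : ℝ) + 1) ^ (p + 1) := by
    intro i
    have hint : ∀ (j : Fin n) (k : ℕ), k ≤ p →
        MeasureTheory.Integrable (fun ω => |M.W ω i j| ^ k) M.μ := by
      intro j k hk
      exact hb.hWint i j k (le_trans (by exact_mod_cast hk) hpξ)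
    have hmom : ∀ (j : Fin n) (k : ℕ), 2 ≤ k → k ≤ p →
        ∫ ω, |M.W ω i j| ^ k ∂M.μ ≤ C₀ ^ k / (n * M.q ^ (k - 2)) := by
      intro j k hk2 hkp
      rcases Nat.lt_or_ge k 3 with hk3 | hk3
      · have hk2' : k = 2 := by omega
        subst hk2'
        have h1 : (fun ω => |M.W ω i j| ^ 2) = fun ω => (M.W ω i j) ^ 2 := by
          ext ω; rw [sq_abs]
        rw [h1]
        have h2 : ∫ ω, (M.W ω i j) ^ 2 ∂M.μ = M.s i j := rfl
        rw [h2]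
        have h3 := hb.hWvar i j
        have hn0 : (0:ℝ) < (n:ℝ) := by positivity
        calc M.s i j ≤ C₀ / n := h3
          _ ≤ C₀ ^ 2 / (n * M.q ^ (2 - 2)) := by
              rw [pow_zero, mul_one]
              gcongr
              nlinarith
      · have hcast : M.q ^ ((k : ℝ) - 2) = M.q ^ (k - 2 : ℕ) := by
          rw [show ((k : ℝ) - 2) = ((k - 2 : ℕ) : ℝ) by
            push_cast [Nat.cast_sub (by omega : 2 ≤ k)]; ring]
          rw [Real.rpow_natCast]
        have := hb.hWmom i j k hk3 (le_trans (by exact_mod_cast hkp) hpξ)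
        rwa [hcast] at this
    exact stmt11_moment_bound hn1 hp2 hC₀ hq1 (fun j ω => M.W ω i j)
      (fun j => hb.hWmeas i j) (hrow i) hint (fun j => hb.hWmean i j) hmom
  -- Markov bound per row
  set T : ℝ := 8 * C₀ * ξ with hTdef
  have hT0 : (0:ℝ) < T := by positivity
  set r0 : ℝ := C₀ ^ p * ((p : ℝ) + 1) ^ (p + 1) / T ^ p with hr0def
  have hbadi : ∀ i : Fin n,
      M.μ {ω | T ^ p ≤ (∑ j, M.W ω i j) ^ p} ≤ ENNReal.ofReal r0 := by
    intro i
    have hnn : 0 ≤ᵐ[M.μ] fun ω => (∑ j, M.W ω i j) ^ p :=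
      Filter.Eventually.of_forall fun ω => hpev.pow_nonneg _
    have hmar := MeasureTheory.mul_meas_ge_le_integral_of_nonneg hnn (hmomi i).1 (T ^ p)
    have hden : (0:ℝ) < T ^ p := by positivity
    have htoReal : (M.μ {ω | T ^ p ≤ (∑ j, M.W ω i j) ^ p}).toReal ≤ r0 := by
      rw [hr0def, le_div_iff₀ hden]
      have := (hmomi i).2
      simp only [MeasureTheory.measureReal_def] at hmar
      nlinarith [hmar]
    calc M.μ {ω | T ^ p ≤ (∑ j, M.W ω i j) ^ p}
        = ENNReal.ofReal ((M.μ {ω | T ^ p ≤ (∑ j, M.W ω i j) ^ p}).toReal) :=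
          (ENNReal.ofReal_toReal (MeasureTheory.measure_ne_top _ _)).symm
      _ ≤ ENNReal.ofReal r0 := ENNReal.ofReal_le_ofReal htoReal
  -- union bound
  have harith : (n : ℝ) * r0 ≤ Real.exp (-ξ) := by
    rw [hr0def, hTdef]
    exact stmt11_arith hC₀ hξ4 hn3 hlogcond hpξ hpl
  have hexps : Real.exp (-ξ) ≤ Real.exp (-(1 / (32 * C₀ ^ 2) * ξ)) := by
    apply Real.exp_le_exp.2
    have hc1 : 1 / (32 * C₀ ^ 2) ≤ 1 := by
      rw [div_le_one (by positivity)]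
      nlinarith
    nlinarith
  have hUnion : M.μ (⋃ i : Fin n, {ω | T ^ p ≤ (∑ j, M.W ω i j) ^ p})
      ≤ ENNReal.ofReal (Real.exp (-(1 / (32 * C₀ ^ 2) * ξ))) := by
    calc M.μ (⋃ i : Fin n, {ω | T ^ p ≤ (∑ j, M.W ω i j) ^ p})
        ≤ ∑' i : Fin n, M.μ {ω | T ^ p ≤ (∑ j, M.W ω i j) ^ p} :=
          MeasureTheory.measure_iUnion_le _
      _ = ∑ i : Fin n, M.μ {ω | T ^ p ≤ (∑ j, M.W ω i j) ^ p} := tsum_fintype _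
      _ ≤ ∑ _i : Fin n, ENNReal.ofReal r0 := Finset.sum_le_sum fun i _ => hbadi i
      _ = ((n : ℕ) : ENNReal) * ENNReal.ofReal r0 := by
          rw [Finset.sum_const, Finset.card_univ, Fintype.card_fin, nsmul_eq_mul]
      _ = ENNReal.ofReal ((n : ℝ) * r0) := by
          rw [ENNReal.ofReal_mul (by positivity), ENNReal.ofReal_natCast]
      _ ≤ ENNReal.ofReal (Real.exp (-(1 / (32 * C₀ ^ 2) * ξ))) :=
          ENNReal.ofReal_le_ofReal (le_trans harith hexps)
  -- the good event
  set G : Set M.Ω := {ω | (∀ i, 0 < M.Ld ω i) ∧ ∀ i, |∑ j, M.W ω i j| ≤ T} with hGdef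
  have hGsub : G ⊆ {ω | ∀ i,
      |(M.Ld ω i ^ α - M.Λd i ^ α) / M.Λd i ^ α|
        ≤ 32 * α * Real.exp α * C₀ ^ 2 * xiPar n a₀ / (M.q * M.β)} := by
    intro ω hω
    exact stmt11_det M hα hC₀ hb hn3 hξ4 hsmall ω hω.1 hω.2
  have hGc : Gᶜ ⊆ {ω | ¬ ∀ i, 0 < M.Ld ω i}
      ∪ ⋃ i : Fin n, {ω | T ^ p ≤ (∑ j, M.W ω i j) ^ p} := by
    intro ω hω
    rw [Set.mem_compl_iff, hGdef, Set.mem_setOf_eq, not_and_or] at hω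
    rcases hω with h | h
    · exact Or.inl h
    · right
      push_neg at h
      obtain ⟨i, hi⟩ := h
      refine Set.mem_iUnion.2 ⟨i, ?_⟩
      have : T ^ p ≤ |∑ j, M.W ω i j| ^ p := pow_le_pow_left₀ (le_of_lt hT0) (le_of_lt hi) p
      rwa [hpev.pow_abs] at this
  have hnull : M.μ {ω | ¬ ∀ i, 0 < M.Ld ω i} = 0 := by
    have := hb.hLpos
    rwa [MeasureTheory.ae_iff] at this
  have hGcμ : M.μ Gᶜ ≤ ENNReal.ofReal (Real.exp (-(1 / (32 * C₀ ^ 2) * ξ))) := by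
    calc M.μ Gᶜ ≤ M.μ ({ω | ¬ ∀ i, 0 < M.Ld ω i}
          ∪ ⋃ i : Fin n, {ω | T ^ p ≤ (∑ j, M.W ω i j) ^ p}) :=
          MeasureTheory.measure_mono hGc
      _ ≤ M.μ {ω | ¬ ∀ i, 0 < M.Ld ω i}
          + M.μ (⋃ i : Fin n, {ω | T ^ p ≤ (∑ j, M.W ω i j) ^ p}) :=
          MeasureTheory.measure_union_le _ _
      _ ≤ 0 + ENNReal.ofReal (Real.exp (-(1 / (32 * C₀ ^ 2) * ξ))) := by
          rw [hnull]
          exact add_le_add_right hUnion 0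
      _ = ENNReal.ofReal (Real.exp (-(1 / (32 * C₀ ^ 2) * ξ))) := by rw [zero_add]
  calc 1 - ENNReal.ofReal (Real.exp (-(1 / (32 * C₀ ^ 2) * ξ)))
      ≤ 1 - M.μ Gᶜ := tsub_le_tsub_left hGcμ 1
    _ ≤ M.μ G := by
        rw [tsub_le_iff_right]
        calc (1 : ENNReal) = M.μ Set.univ := (MeasureTheory.measure_univ).symm
          _ = M.μ (G ∪ Gᶜ) := by rw [Set.union_compl_self]
          _ ≤ M.μ G + M.μ Gᶜ := MeasureTheory.measure_union_le _ _
    _ ≤ M.μ {ω | ∀ i, |(M.Ld ω i ^ α - M.Λd i ^ α) / M.Λd i ^ α|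
          ≤ 32 * α * Real.exp α * C₀ ^ 2 * xiPar n a₀ / (M.q * M.β)} :=
        MeasureTheory.measure_mono hGsub

end
end

section
/- Frobenius-norm closeness of the leave-one-out degree matrix (first bound of the Lemma on L_[i]): Define, for each fixed index i ∈ {1,…,n}, the random diagonal matrix L_[i] by (L_[i])_i := L_i and, for j ≠ i, (L_[i])_j := Λ_j + (qβ_n)^{−1}·( Σ_{s≠i} W_{js} + (τ_j/n)·Σ_{t≠i, s≠i} W_{ts} ). Then there exist constants C₆ > 0 and c₆ > 0, depending only on C₀, such that for all sufficiently large n and every i ∈ {1,…,n}, with probability at least 1 − e^{−c₆ξ}, ‖L − L_[i]‖_F ≤ C₆/(q·β_n), where ‖·‖_F denotes the Frobenius norm. -/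
open MeasureTheory Matrix Filter ProbabilityTheory

noncomputable section

/-- the leave-one-out degree matrix `L_[i]` -/
def Mdl.Lbr {n : ℕ} (M : Mdl n) (i : Fin n) (ω : M.Ω) (j : Fin n) : ℝ :=
  if j = i then M.Ld ω j
  else M.Λd j + (M.q * M.β)⁻¹ *
    ((∑ s ∈ Finset.univ.erase i, M.W ω j s) +
      (M.τ j / n) * ∑ t ∈ Finset.univ.erase i, ∑ s ∈ Finset.univ.erase i, M.W ω t s)


section Aux

lemma Mdl.Ld_sub_Lam {n : ℕ} (M : Mdl n) (hn : 0 < n) (hq : M.q ≠ 0) (hβ : M.β ≠ 0)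
    (ω : M.Ω) (j : Fin n) :
    M.Ld ω j - M.Λd j = (M.q * M.β)⁻¹ *
      ((∑ l, M.W ω j l) + (M.τ j / n) * ∑ t, ∑ s, M.W ω t s) := by
  have hn' : (n : ℝ) ≠ 0 := Nat.cast_ne_zero.2 hn.ne'
  have hd : ∀ t, M.d ω t = M.q * M.θ t + ∑ l, M.W ω t l := by
    intro t
    simp only [Mdl.d, Mdl.θ, Finset.sum_add_distrib]
    field_simp
  have hdbar : M.dbar ω = M.q * M.θbar + (∑ t, ∑ s, M.W ω t s) / n := by
    simp only [Mdl.dbar, Mdl.θbar, hd, Finset.sum_add_distrib]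
    field_simp
    rw [Finset.mul_sum]
  rw [Mdl.Ld, Mdl.Λd, hd, hdbar]
  field_simp
  ring

lemma key_det {n : ℕ} (M : Mdl n) (C₀ : ℝ) (hC₀ : 1 ≤ C₀) (hn : 2 ≤ n)
    (hq : 0 < M.q) (hβ : 0 < M.β) (hτ0 : ∀ i, 0 ≤ M.τ i) (hτ1 : ∀ i, M.τ i ≤ C₀)
    (hWsym : ∀ ω, (M.W ω)ᵀ = M.W ω) (i : Fin n) (ω : M.Ω)
    (hR : ∑ l, (M.W ω i l) ^ 2 ≤ 5 * C₀) :
    Real.sqrt (∑ j, ∑ l,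
      (Matrix.diagonal (M.Ld ω) j l - Matrix.diagonal (M.Lbr i ω) j l) ^ 2) ≤
      8 * C₀ ^ 2 / (M.q * M.β) := by
  have hn0 : 0 < n := lt_of_lt_of_le two_pos hn
  have hn' : (0:ℝ) < (n:ℝ) := by exact_mod_cast hn0
  have hWs : ∀ a b, M.W ω a b = M.W ω b a := by
    intro a b
    conv_lhs => rw [← hWsym ω]
    rfl
  set R : ℝ := ∑ l, (M.W ω i l) ^ 2 with hRdef
  have hR0 : 0 ≤ R := Finset.sum_nonneg fun l _ => sq_nonneg _
  -- collapse inner sum over l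
  have hinner : ∀ j, (∑ l, (Matrix.diagonal (M.Ld ω) j l - Matrix.diagonal (M.Lbr i ω) j l) ^ 2)
      = (M.Ld ω j - M.Lbr i ω j) ^ 2 := by
    intro j
    rw [Finset.sum_eq_single j]
    · simp [Matrix.diagonal_apply_eq]
    · intro l _ hl
      simp [Matrix.diagonal_apply_ne' _ hl]
    · simp
  -- the difference formula for j ≠ i
  set D : ℝ := (∑ t, ∑ s, M.W ω t s) -
      (∑ t ∈ Finset.univ.erase i, ∑ s ∈ Finset.univ.erase i, M.W ω t s) with hDdef
  have hdiff : ∀ j, j ≠ i → M.Ld ω j - M.Lbr i ω j =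
      (M.q * M.β)⁻¹ * (M.W ω j i + (M.τ j / n) * D) := by
    intro j hj
    have h1 := M.Ld_sub_Lam hn0 hq.ne' hβ.ne' ω j
    have h2 : (∑ l, M.W ω j l) = M.W ω j i + ∑ s ∈ Finset.univ.erase i, M.W ω j s :=
      (Finset.add_sum_erase _ _ (Finset.mem_univ i)).symm
    rw [Mdl.Lbr, if_neg hj]
    rw [sub_add_eq_sub_sub_swap] at *
    have : M.Ld ω j - M.Λd j -
        (M.q * M.β)⁻¹ * ((∑ s ∈ Finset.univ.erase i, M.W ω j s) +
          M.τ j / ↑n * ∑ t ∈ Finset.univ.erase i, ∑ s ∈ Finset.univ.erase i, M.W ω t s) =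
        (M.q * M.β)⁻¹ * (M.W ω j i + (M.τ j / n) * D) := by
      rw [h1, hDdef, h2]; ring
    linarith [this]
  -- bound on D
  have hDbound : D ^ 2 ≤ 4 * n * R := by
    have hsplit : D = (∑ s, M.W ω i s) + ∑ t ∈ Finset.univ.erase i, M.W ω t i := by
      have e1 : (∑ t, ∑ s, M.W ω t s)
          = (∑ s, M.W ω i s) + ∑ t ∈ Finset.univ.erase i, ∑ s, M.W ω t s :=
        (Finset.add_sum_erase _ _ (Finset.mem_univ i)).symm
      have e2 : ∀ t, (∑ s, M.W ω t s)
          = M.W ω t i + ∑ s ∈ Finset.univ.erase i, M.W ω t s := fun t =>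
        (Finset.add_sum_erase _ _ (Finset.mem_univ i)).symm
      rw [hDdef, e1]
      rw [Finset.sum_congr rfl fun t _ => e2 t, Finset.sum_add_distrib]
      ring
    have habs : |D| ≤ 2 * ∑ s, |M.W ω i s| := by
      rw [hsplit]
      refine (abs_add_le _ _).trans ?_
      have b1 : |∑ s, M.W ω i s| ≤ ∑ s, |M.W ω i s| := Finset.abs_sum_le_sum_abs _ _
      have b2 : |∑ t ∈ Finset.univ.erase i, M.W ω t i| ≤ ∑ s, |M.W ω i s| := by
        refine (Finset.abs_sum_le_sum_abs _ _).trans ?_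
        have : ∀ t, |M.W ω t i| = |M.W ω i t| := fun t => by rw [hWs]
        rw [Finset.sum_congr rfl fun t _ => this t]
        exact Finset.sum_le_sum_of_subset_of_nonneg (Finset.subset_univ _)
          (fun x _ _ => abs_nonneg _)
      linarith
    have hCS : (∑ s, |M.W ω i s|) ^ 2 ≤ n * R := by
      have := sq_sum_le_card_mul_sum_sq (s := (Finset.univ : Finset (Fin n)))
        (f := fun s => |M.W ω i s|)
      simpa [sq_abs, hRdef] using this
    calc D ^ 2 ≤ (2 * ∑ s, |M.W ω i s|) ^ 2 := by
          rw [← sq_abs D]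
          exact pow_le_pow_left₀ (abs_nonneg _) habs 2
      _ = 4 * (∑ s, |M.W ω i s|) ^ 2 := by ring
      _ ≤ 4 * (n * R) := by linarith
      _ = 4 * n * R := by ring
  -- sum bound
  have hsum : (∑ j, (M.Ld ω j - M.Lbr i ω j) ^ 2) ≤
      (M.q * M.β)⁻¹ ^ 2 * (64 * C₀ ^ 4) := by
    have hterm : ∀ j, j ≠ i → (M.Ld ω j - M.Lbr i ω j) ^ 2 ≤
        (M.q * M.β)⁻¹ ^ 2 * (2 * (M.W ω j i) ^ 2 + 2 * (C₀ / n) ^ 2 * D ^ 2) := by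
      intro j hj
      rw [hdiff j hj, mul_pow]
      refine mul_le_mul_of_nonneg_left ?_ (sq_nonneg _)
      have h1 : (M.W ω j i + (M.τ j / n) * D) ^ 2 ≤
          2 * (M.W ω j i) ^ 2 + 2 * ((M.τ j / n) * D) ^ 2 := by nlinarith [sq_nonneg (M.W ω j i - (M.τ j / n) * D)]
      have h2 : ((M.τ j / n) * D) ^ 2 ≤ (C₀ / n) ^ 2 * D ^ 2 := by
        rw [mul_pow]
        refine mul_le_mul_of_nonneg_right ?_ (sq_nonneg _)
        have : 0 ≤ M.τ j / n := div_nonneg (hτ0 j) hn'.le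
        refine pow_le_pow_left₀ this ?_ 2
        gcongr
        exact hτ1 j
      linarith
    have hzero : (M.Ld ω i - M.Lbr i ω i) ^ 2 = 0 := by
      rw [Mdl.Lbr, if_pos rfl]; ring
    have hsplit := (Finset.add_sum_erase Finset.univ
      (fun j => (M.Ld ω j - M.Lbr i ω j) ^ 2) (Finset.mem_univ i)).symm
    rw [hsplit, hzero, zero_add]
    have step : (∑ j ∈ Finset.univ.erase i, (M.Ld ω j - M.Lbr i ω j) ^ 2) ≤
        ∑ j ∈ Finset.univ.erase i,
          (M.q * M.β)⁻¹ ^ 2 * (2 * (M.W ω j i) ^ 2 + 2 * (C₀ / n) ^ 2 * D ^ 2) :=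
      Finset.sum_le_sum fun j hj => hterm j (Finset.ne_of_mem_erase hj)
    refine step.trans ?_
    rw [← Finset.mul_sum]
    refine mul_le_mul_of_nonneg_left ?_ (sq_nonneg _)
    have hWsum : (∑ j ∈ Finset.univ.erase i, (M.W ω j i) ^ 2) ≤ R := by
      have : ∀ j, (M.W ω j i) ^ 2 = (M.W ω i j) ^ 2 := fun j => by rw [hWs]
      rw [Finset.sum_congr rfl fun j _ => this j]
      exact Finset.sum_le_sum_of_subset_of_nonneg (Finset.subset_univ _)
        (fun x _ _ => sq_nonneg _)
    have hcard : ((Finset.univ.erase i).card : ℝ) ≤ n := by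
      have := Finset.card_erase_le (a := i) (s := (Finset.univ : Finset (Fin n)))
      calc ((Finset.univ.erase i).card : ℝ) ≤ (Finset.univ : Finset (Fin n)).card := by
            exact_mod_cast this
        _ = n := by simp
    have hconst : (∑ _j ∈ Finset.univ.erase i, 2 * (C₀ / n) ^ 2 * D ^ 2)
        ≤ 8 * C₀ ^ 2 * R := by
      rw [Finset.sum_const, nsmul_eq_mul]
      have h1 : 0 ≤ 2 * (C₀ / n) ^ 2 := by positivity
      calc ((Finset.univ.erase i).card : ℝ) * (2 * (C₀ / n) ^ 2 * D ^ 2)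
          ≤ (n : ℝ) * (2 * (C₀ / n) ^ 2 * (4 * n * R)) := by
            refine mul_le_mul hcard (mul_le_mul_of_nonneg_left hDbound h1) (by positivity) hn'.le
        _ = 8 * C₀ ^ 2 * R := by field_simp; ring
    rw [Finset.sum_add_distrib]
    have h2R : (∑ j ∈ Finset.univ.erase i, 2 * (M.W ω j i) ^ 2) ≤ 2 * R := by
      rw [← Finset.mul_sum]
      linarith
    have hRC : R ≤ 5 * C₀ := hR
    have hC1 : C₀ ≤ C₀ ^ 2 := by nlinarith
    nlinarith [sq_nonneg C₀]
  -- conclude with sqrt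
  have hqβ : 0 < M.q * M.β := mul_pos hq hβ
  have hfinal : (∑ j, ∑ l,
      (Matrix.diagonal (M.Ld ω) j l - Matrix.diagonal (M.Lbr i ω) j l) ^ 2)
      ≤ (8 * C₀ ^ 2 / (M.q * M.β)) ^ 2 := by
    rw [Finset.sum_congr rfl fun j _ => hinner j]
    refine hsum.trans ?_
    rw [div_pow, mul_pow]
    rw [div_eq_mul_inv, ← inv_pow]
    ring_nf
    exact le_of_eq (by ring)
  refine (Real.sqrt_le_sqrt hfinal).trans ?_
  rw [Real.sqrt_sq (by positivity)]

end Aux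


lemma iIndepFun_reindex {Ω ι κ : Type*} {mΩ : MeasurableSpace Ω} {μ : MeasureTheory.Measure Ω}
    {f : ι → Ω → ℝ}
    (h : iIndepFun f μ) (g : κ → ι) (hg : Function.Injective g) :
    iIndepFun (fun k => f (g k)) μ := by
  rw [iIndepFun_iff_measure_inter_preimage_eq_mul] at h ⊢
  intro S sets hsets
  classical
  set sets' : ι → Set ℝ := fun j =>
    if hj : ∃ k ∈ S, g k = j then sets hj.choose else Set.univ with hsets'def
  have hkey : ∀ k ∈ S, sets' (g k) = sets k := by
    intro k hk
    have hex : ∃ k' ∈ S, g k' = g k := ⟨k, hk, rfl⟩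
    have hch := hex.choose_spec
    have heq : hex.choose = k := hg hch.2
    simp only [sets', dif_pos hex, heq]
  have hmeas' : ∀ j, j ∈ S.image g → MeasurableSet (sets' j) := by
    intro j _
    by_cases hex : ∃ k ∈ S, g k = j
    · simp only [sets', dif_pos hex]
      exact hsets _ hex.choose_spec.1
    · simp only [sets', dif_neg hex]
      exact MeasurableSet.univ
  have e1 : (⋂ k ∈ S, f (g k) ⁻¹' sets k) = ⋂ j ∈ S.image g, f j ⁻¹' sets' j := by
    rw [Finset.set_biInter_finset_image]
    exact Set.iInter₂_congr fun k hk => by rw [hkey k hk]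
  rw [e1, h (S.image g) hmeas', Finset.prod_image (fun a _ b _ hab => hg hab)]
  exact Finset.prod_congr rfl fun k hk => by rw [hkey k hk]

lemma row_indep {n : ℕ} (M : Mdl n)
    (hsym : ∀ ω, (M.W ω)ᵀ = M.W ω)
    (hind : iIndepFun
      (fun (p : {p : Fin n × Fin n // p.1 ≤ p.2}) => fun ω => M.W ω p.1.1 p.1.2) M.μ)
    (i : Fin n) :
    iIndepFun (fun l (ω : M.Ω) => M.W ω i l) M.μ := by
  classical
  let g : Fin n → {p : Fin n × Fin n // p.1 ≤ p.2} :=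
    fun l => if h : i ≤ l then ⟨(i, l), h⟩ else ⟨(l, i), le_of_not_ge h⟩
  have hg : Function.Injective g := by
    intro a b hab
    simp only [g] at hab
    by_cases ha : i ≤ a <;> by_cases hb : i ≤ b
    · rw [dif_pos ha, dif_pos hb] at hab
      simp only [Subtype.mk.injEq, Prod.mk.injEq] at hab
      exact hab.2
    · rw [dif_pos ha, dif_neg hb] at hab
      simp only [Subtype.mk.injEq, Prod.mk.injEq] at hab
      exact hab.2.trans hab.1
    · rw [dif_neg ha, dif_pos hb] at hab
      simp only [Subtype.mk.injEq, Prod.mk.injEq] at hab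
      exact hab.1.trans hab.2
    · rw [dif_neg ha, dif_neg hb] at hab
      simp only [Subtype.mk.injEq, Prod.mk.injEq] at hab
      exact hab.1
  have h2 := iIndepFun_reindex hind g hg
  have heq : (fun l => (fun ω => M.W ω (g l).1.1 (g l).1.2)) = fun l (ω : M.Ω) => M.W ω i l := by
    funext l ω
    by_cases h : i ≤ l
    · simp only [g, dif_pos h]
    · simp only [g, dif_neg h]
      have := congrFun (congrFun (hsym ω) l) i
      rw [Matrix.transpose_apply] at this
      exact this.symm
  rwa [heq] at h2


set_option maxHeartbeats 1000000 in
lemma key_prob {n : ℕ} (M : Mdl n) (C₀ a₀ α : ℝ) (hC₀ : 1 ≤ C₀)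
    (hB : M.HBase α C₀ a₀)
    (hlog : 8 ≤ Real.log (xiPar n a₀)) (hC₀ξ : C₀ ≤ xiPar n a₀) (i : Fin n) :
    M.μ {ω | 5 * C₀ < ∑ l, (M.W ω i l) ^ 2} ≤
      ENNReal.ofReal (Real.exp (-(xiPar n a₀))) := by
  haveI := hB.prob
  classical
  set ξ : ℝ := xiPar n a₀ with hξdef
  have hξnn : 0 ≤ ξ := Real.rpow_nonneg (Real.log_natCast_nonneg n) _
  have hξpos : 0 < ξ := by
    rcases hξnn.eq_or_lt with h | h
    · exfalso; rw [← h] at hlog; simp [Real.log_zero] at hlog; linarith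
    · exact h
  have hξ256 : (256 : ℝ) ≤ ξ := by
    have h1 : (2:ℝ) ≤ Real.exp 1 := by
      have := Real.exp_one_gt_d9; linarith
    calc (256:ℝ) = 2 ^ 8 := by norm_num
      _ ≤ Real.exp 1 ^ 8 := pow_le_pow_left₀ (by norm_num) h1 8
      _ = Real.exp 8 := by rw [Real.exp_one_pow]; norm_num
      _ ≤ Real.exp (Real.log ξ) := Real.exp_le_exp.2 hlog
      _ = ξ := Real.exp_log hξpos
  set m : ℕ := ⌊ξ / 2⌋₊ with hmdef
  have hm_le : (m : ℝ) ≤ ξ / 2 := Nat.floor_le (by positivity)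
  have hm_gt : ξ / 2 - 1 < (m : ℝ) := by
    have := Nat.lt_floor_add_one (ξ / 2); linarith
  have hm2 : 2 ≤ m := by
    have h2 : (2:ℝ) ≤ (m:ℝ) := by linarith
    exact_mod_cast h2
  have h2mN : ((2 * m : ℕ) : ℝ) ≤ ξ := by push_cast; linarith
  have h3_2m : 3 ≤ 2 * m := by omega
  have hqξ : ξ ^ 3 ≤ M.q := hB.hq1
  have hqpos : 0 < M.q := lt_of_lt_of_le (pow_pos hξpos 3) hqξ
  have hn0 : 0 < n := lt_of_lt_of_le two_pos hB.hn
  have hnR : (0:ℝ) < n := by exact_mod_cast hn0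
  have hmeasW : ∀ l, Measurable fun ω => M.W ω i l := fun l => hB.hWmeas i l
  set Ytil : Fin n → M.Ω → ℝ := fun l ω => min ((M.W ω i l) ^ 2) ξ⁻¹ with hYdef
  have hY0 : ∀ l ω, 0 ≤ Ytil l ω := fun l ω => le_min (sq_nonneg _) (by positivity)
  have hYu : ∀ l ω, Ytil l ω ≤ ξ⁻¹ := fun l ω => min_le_right _ _
  have hYmeas : ∀ l, Measurable (Ytil l) :=
    fun l => ((hmeasW l).pow_const 2).min measurable_const
  set bad1 : Fin n → Set M.Ω := fun l => {ω | ξ⁻¹ ^ m ≤ |M.W ω i l| ^ (2 * m)} with hb1def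
  set bad2 : Set M.Ω := {ω | 5 * C₀ ≤ ∑ l, Ytil l ω} with hb2def
  -- inclusion
  have hsubset : {ω | 5 * C₀ < ∑ l, (M.W ω i l) ^ 2} ⊆ (⋃ l, bad1 l) ∪ bad2 := by
    intro ω hω
    by_cases h1 : ∃ l, ω ∈ bad1 l
    · exact Set.mem_union_left _ (Set.mem_iUnion.2 h1)
    · push_neg at h1
      refine Set.mem_union_right _ ?_
      have hall : ∀ l, (M.W ω i l) ^ 2 ≤ ξ⁻¹ := by
        intro l
        have hl := h1 l
        simp only [hb1def, Set.mem_setOf_eq, not_le] at hl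
        by_contra hc
        push_neg at hc
        have h2 : ξ⁻¹ ^ m ≤ ((M.W ω i l) ^ 2) ^ m :=
          pow_le_pow_left₀ (by positivity) hc.le m
        rw [← sq_abs, ← pow_mul] at h2
        exact absurd (lt_of_le_of_lt h2 hl) (lt_irrefl _)
      have hsum : ∑ l, Ytil l ω = ∑ l, (M.W ω i l) ^ 2 :=
        Finset.sum_congr rfl fun l _ => min_eq_left (hall l)
      show ω ∈ bad2
      simp only [hb2def, Set.mem_setOf_eq, hsum]
      exact le_of_lt hω
  -- Markov bound for bad1
  set B : ℝ := C₀ ^ (2 * m) / (n * M.q ^ (((2 * m : ℕ) : ℝ) - 2)) with hBdef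
  have hqrpow_pos : 0 < M.q ^ (((2 * m : ℕ) : ℝ) - 2) := Real.rpow_pos_of_pos hqpos _
  have hmarkov : ∀ l, M.μ (bad1 l) ≤ ENNReal.ofReal (ξ ^ m * B) := by
    intro l
    have hint : Integrable (fun ω => |M.W ω i l| ^ (2 * m)) M.μ := hB.hWint i l (2 * m) h2mN
    have hmar := mul_meas_ge_le_integral_of_nonneg
      (ae_of_all _ fun ω => by positivity) hint (ξ⁻¹ ^ m)
    have hI := hB.hWmom i l (2 * m) h3_2m h2mN
    have hpow : (0:ℝ) < ξ⁻¹ ^ m := by positivity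
    have htR : (M.μ (bad1 l)).toReal ≤ ξ ^ m * B := by
      have h1 : (M.μ (bad1 l)).toReal ≤ (∫ ω, |M.W ω i l| ^ (2 * m) ∂M.μ) / (ξ⁻¹ ^ m) := by
        rw [le_div_iff₀ hpow]
        calc (M.μ (bad1 l)).toReal * ξ⁻¹ ^ m = ξ⁻¹ ^ m * (M.μ (bad1 l)).toReal := by ring
          _ ≤ _ := hmar
      refine h1.trans ?_
      rw [div_eq_mul_inv, ← inv_pow, inv_inv, mul_comm]
      exact mul_le_mul_of_nonneg_left hI (by positivity)
    rw [← ENNReal.ofReal_toReal (measure_ne_top M.μ _)]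
    exact ENNReal.ofReal_le_ofReal htR
  have hsum1 : (∑ l : Fin n, M.μ (bad1 l)) ≤ ENNReal.ofReal ((n:ℝ) * (ξ ^ m * B)) := by
    calc (∑ l : Fin n, M.μ (bad1 l)) ≤ ∑ _l : Fin n, ENNReal.ofReal (ξ ^ m * B) :=
          Finset.sum_le_sum fun l _ => hmarkov l
      _ = (n : ENNReal) * ENNReal.ofReal (ξ ^ m * B) := by
          rw [Finset.sum_const, Finset.card_univ, Fintype.card_fin, nsmul_eq_mul]
      _ = ENNReal.ofReal ((n:ℝ)) * ENNReal.ofReal (ξ ^ m * B) := by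
          rw [ENNReal.ofReal_natCast]
      _ = ENNReal.ofReal ((n:ℝ) * (ξ ^ m * B)) :=
          (ENNReal.ofReal_mul (by positivity)).symm
  -- real estimate for bad1 total
  have hrealA : (n:ℝ) * (ξ ^ m * B) ≤ Real.exp (-(3 * ξ)) := by
    have hcast : ((2 * m : ℕ) : ℝ) - 2 = ((2 * m - 2 : ℕ) : ℝ) := by
      have : 2 ≤ 2 * m := by omega
      push_cast [this]
      ring
    have hq2m : M.q ^ (((2 * m : ℕ) : ℝ) - 2) = M.q ^ (2 * m - 2 : ℕ) := by
      rw [hcast, Real.rpow_natCast]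
    have hstep1 : (n:ℝ) * (ξ ^ m * B) = ξ ^ m * C₀ ^ (2 * m) / M.q ^ (2 * m - 2 : ℕ) := by
      rw [hBdef, hq2m]
      field_simp
    have hC2m : C₀ ^ (2 * m) ≤ ξ ^ (2 * m) := pow_le_pow_left₀ (by linarith) hC₀ξ _
    have hqlow : (ξ ^ 3) ^ (2 * m - 2) ≤ M.q ^ (2 * m - 2 : ℕ) :=
      pow_le_pow_left₀ (by positivity) hqξ _
    have hξ6m : (ξ ^ 3) ^ (2 * m - 2) = ξ ^ (6 * m - 6 : ℕ) := by
      rw [← pow_mul]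
      congr 1
      omega
    have hkcast : ((3 * m - 6 : ℕ) : ℝ) = 3 * (m:ℝ) - 6 := by
      have : 6 ≤ 3 * m := by omega
      push_cast [this]
      ring
    have hξk : Real.exp (3 * ξ) ≤ ξ ^ (3 * m - 6 : ℕ) := by
      have h1 : ξ ^ (3 * m - 6 : ℕ) = Real.exp (Real.log ξ * ((3 * m - 6 : ℕ) : ℝ)) := by
        rw [← Real.rpow_natCast ξ (3 * m - 6), Real.rpow_def_of_pos hξpos]
      rw [h1]
      apply Real.exp_le_exp.2
      rw [hkcast]
      nlinarith [mul_nonneg (by linarith : (0:ℝ) ≤ Real.log ξ - 8)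
        (by nlinarith : (0:ℝ) ≤ 3 * (m:ℝ) - 6)]
    have hkey : ξ ^ (3 * m) / ξ ^ (6 * m - 6 : ℕ) ≤ Real.exp (-(3 * ξ)) := by
      have hsplit : ξ ^ (6 * m - 6 : ℕ) = ξ ^ (3 * m) * ξ ^ (3 * m - 6 : ℕ) := by
        rw [← pow_add]
        congr 1
        omega
      rw [div_le_iff₀ (pow_pos hξpos _)]
      have h2 : 1 ≤ Real.exp (-(3 * ξ)) * ξ ^ (3 * m - 6 : ℕ) := by
        rw [Real.exp_neg]
        calc (1:ℝ) = (Real.exp (3 * ξ))⁻¹ * Real.exp (3 * ξ) := by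
              rw [inv_mul_cancel₀ (Real.exp_pos _).ne']
          _ ≤ (Real.exp (3 * ξ))⁻¹ * ξ ^ (3 * m - 6 : ℕ) :=
              mul_le_mul_of_nonneg_left hξk (by positivity)
      calc ξ ^ (3 * m) = 1 * ξ ^ (3 * m) := (one_mul _).symm
        _ ≤ (Real.exp (-(3 * ξ)) * ξ ^ (3 * m - 6 : ℕ)) * ξ ^ (3 * m) :=
            mul_le_mul_of_nonneg_right h2 (by positivity)
        _ = Real.exp (-(3 * ξ)) * ξ ^ (6 * m - 6 : ℕ) := by rw [hsplit]; ring
    calc (n:ℝ) * (ξ ^ m * B) = ξ ^ m * C₀ ^ (2 * m) / M.q ^ (2 * m - 2 : ℕ) := hstep1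
      _ ≤ ξ ^ m * ξ ^ (2 * m) / ξ ^ (6 * m - 6 : ℕ) := by
          apply div_le_div₀ (by positivity)
            (mul_le_mul_of_nonneg_left hC2m (by positivity))
            (by positivity)
          rw [← hξ6m]
          exact hqlow
      _ = ξ ^ (3 * m) / ξ ^ (6 * m - 6 : ℕ) := by
          rw [← pow_add]
          congr 2
          omega
      _ ≤ Real.exp (-(3 * ξ)) := hkey
  -- independence of truncated row
  have hindY : iIndepFun Ytil M.μ := by
    have h0 := row_indep M hB.hWsym hB.hWindep i
    have h2 := h0.comp (fun _ x => min (x ^ 2) ξ⁻¹)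
      (fun _ => (measurable_id.pow_const 2).min measurable_const)
    exact h2
  -- integrability facts
  have hintY : ∀ l, Integrable (Ytil l) M.μ := by
    intro l
    refine Integrable.mono' (integrable_const ξ⁻¹) (hYmeas l).aestronglyMeasurable
      (ae_of_all _ fun ω => ?_)
    rw [Real.norm_eq_abs, abs_of_nonneg (hY0 l ω)]
    exact hYu l ω
  have hints : ∀ l, Integrable (fun ω => (M.W ω i l) ^ 2) M.μ := by
    intro l
    have h := hB.hWint i l 2 (by push_cast; linarith)
    simpa [sq_abs] using h
  have hEY : ∀ l, ∫ ω, Ytil l ω ∂M.μ ≤ M.s i l := by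
    intro l
    exact integral_mono (hintY l) (hints l) (fun ω => min_le_left _ _)
  -- mgf bound
  have he1 : (2:ℝ) ≤ Real.exp 1 := by have := Real.exp_one_gt_d9; linarith
  have he2 : Real.exp 1 ≤ 2.7182818286 := by have := Real.exp_one_lt_d9; linarith
  have hmgf : ∀ l, mgf (Ytil l) M.μ ξ ≤ 1 + (Real.exp 1 - 1) * ξ * M.s i l := by
    intro l
    have hint_exp : Integrable (fun ω => Real.exp (ξ * Ytil l ω)) M.μ := by
      refine Integrable.mono' (integrable_const (Real.exp 1))
        (((hYmeas l).const_mul ξ).exp.aestronglyMeasurable) (ae_of_all _ fun ω => ?_)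
      rw [Real.norm_eq_abs, abs_of_pos (Real.exp_pos _)]
      apply Real.exp_le_exp.2
      calc ξ * Ytil l ω ≤ ξ * ξ⁻¹ := mul_le_mul_of_nonneg_left (hYu l ω) hξpos.le
        _ = 1 := mul_inv_cancel₀ hξpos.ne'
    have hpt : ∀ ω, Real.exp (ξ * Ytil l ω) ≤ 1 + (Real.exp 1 - 1) * (ξ * Ytil l ω) := by
      intro ω
      have hy0 : 0 ≤ ξ * Ytil l ω := mul_nonneg hξpos.le (hY0 l ω)
      have hy1 : ξ * Ytil l ω ≤ 1 := by
        calc ξ * Ytil l ω ≤ ξ * ξ⁻¹ := mul_le_mul_of_nonneg_left (hYu l ω) hξpos.le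
          _ = 1 := mul_inv_cancel₀ hξpos.ne'
      set y : ℝ := ξ * Ytil l ω with hydef
      have hcx := convexOn_exp.2 (Set.mem_univ (0:ℝ)) (Set.mem_univ (1:ℝ))
        (by linarith : (0:ℝ) ≤ 1 - y) hy0 (by ring)
      simp only [smul_eq_mul, mul_zero, mul_one, add_zero, zero_add, Real.exp_zero] at hcx
      linarith [hcx]
    have hint_lin : Integrable (fun ω => 1 + (Real.exp 1 - 1) * (ξ * Ytil l ω)) M.μ := by
      refine (integrable_const (1:ℝ)).add ?_
      exact (((hintY l).const_mul ξ).const_mul (Real.exp 1 - 1))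
    calc mgf (Ytil l) M.μ ξ = ∫ ω, Real.exp (ξ * Ytil l ω) ∂M.μ := rfl
      _ ≤ ∫ ω, (1 + (Real.exp 1 - 1) * (ξ * Ytil l ω)) ∂M.μ :=
          integral_mono hint_exp hint_lin hpt
      _ = 1 + (Real.exp 1 - 1) * ξ * ∫ ω, Ytil l ω ∂M.μ := by
          have hint2 : Integrable (fun ω => (Real.exp 1 - 1) * (ξ * Ytil l ω)) M.μ :=
            ((hintY l).const_mul ξ).const_mul (Real.exp 1 - 1)
          have e1 := integral_add (μ := M.μ) (f := fun _ω => (1:ℝ))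
            (g := fun ω => (Real.exp 1 - 1) * (ξ * Ytil l ω)) (integrable_const 1) hint2
          rw [e1, integral_const, integral_const_mul, integral_const_mul]
          simp only [measure_univ, probReal_univ, ENNReal.toReal_one, smul_eq_mul, one_mul, mul_one]
          ring
      _ ≤ 1 + (Real.exp 1 - 1) * ξ * M.s i l := by
          have hnn : 0 ≤ (Real.exp 1 - 1) * ξ := mul_nonneg (by linarith) hξpos.le
          nlinarith [hEY l]
  -- mgf of the sum
  have hssum : ∑ l, M.s i l ≤ C₀ := by
    calc ∑ l, M.s i l ≤ ∑ _l : Fin n, C₀ / n := Finset.sum_le_sum fun l _ => hB.hWvar i l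
      _ = C₀ := by
          rw [Finset.sum_const, Finset.card_univ, Fintype.card_fin, nsmul_eq_mul]
          field_simp
  have hs_nonneg : ∀ l, 0 ≤ M.s i l := fun l => integral_nonneg fun ω => sq_nonneg _
  have hmgfsum : mgf (∑ l, Ytil l) M.μ ξ ≤ Real.exp ((Real.exp 1 - 1) * ξ * C₀) := by
    rw [hindY.mgf_sum hYmeas Finset.univ]
    calc ∏ l, mgf (Ytil l) M.μ ξ
        ≤ ∏ l, Real.exp ((Real.exp 1 - 1) * ξ * M.s i l) := by
          refine Finset.prod_le_prod (fun l _ => mgf_nonneg) (fun l _ => ?_)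
          refine (hmgf l).trans ?_
          have := Real.add_one_le_exp ((Real.exp 1 - 1) * ξ * M.s i l)
          linarith
      _ = Real.exp (∑ l, (Real.exp 1 - 1) * ξ * M.s i l) := (Real.exp_sum _ _).symm
      _ ≤ Real.exp ((Real.exp 1 - 1) * ξ * C₀) := by
          apply Real.exp_le_exp.2
          rw [← Finset.mul_sum]
          exact mul_le_mul_of_nonneg_left hssum (mul_nonneg (by linarith) hξpos.le)
  -- Chernoff
  have hsum_apply : ∀ ω, (∑ l, Ytil l) ω = ∑ l, Ytil l ω := fun ω => Finset.sum_apply _ _ _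
  have hint_expsum : Integrable (fun ω => Real.exp (ξ * (∑ l, Ytil l) ω)) M.μ := by
    have hms : Measurable (∑ l, Ytil l) := by
      have h1 : Measurable fun ω => ∑ l, Ytil l ω :=
        Finset.measurable_sum Finset.univ fun l _ => hYmeas l
      have h2 : (∑ l, Ytil l) = fun ω => ∑ l, Ytil l ω := funext hsum_apply
      rwa [h2]
    refine Integrable.mono' (integrable_const (Real.exp n))
      ((hms.const_mul ξ).exp.aestronglyMeasurable) (ae_of_all _ fun ω => ?_)
    rw [Real.norm_eq_abs, abs_of_pos (Real.exp_pos _)]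
    apply Real.exp_le_exp.2
    rw [hsum_apply ω]
    calc ξ * ∑ l, Ytil l ω ≤ ξ * ∑ _l : Fin n, ξ⁻¹ := by
          refine mul_le_mul_of_nonneg_left (Finset.sum_le_sum fun l _ => hYu l ω) hξpos.le
      _ = (n:ℝ) := by
          rw [Finset.sum_const, Finset.card_univ, Fintype.card_fin, nsmul_eq_mul]
          field_simp
  have hcher := measure_ge_le_exp_mul_mgf (μ := M.μ) (X := ∑ l, Ytil l) (t := ξ)
    (5 * C₀) hξpos.le hint_expsum
  have hb2 : M.μ bad2 ≤ ENNReal.ofReal (Real.exp (-(3 * ξ))) := by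
    have hset : bad2 = {ω | 5 * C₀ ≤ (∑ l, Ytil l) ω} := by
      ext ω
      simp [hb2def, Finset.sum_apply]
    rw [hset, ← ENNReal.ofReal_toReal (measure_ne_top M.μ _)]
    apply ENNReal.ofReal_le_ofReal
    refine hcher.trans ?_
    calc Real.exp (-ξ * (5 * C₀)) * mgf (∑ l, Ytil l) M.μ ξ
        ≤ Real.exp (-ξ * (5 * C₀)) * Real.exp ((Real.exp 1 - 1) * ξ * C₀) :=
          mul_le_mul_of_nonneg_left hmgfsum (Real.exp_nonneg _)
      _ = Real.exp (-ξ * (5 * C₀) + (Real.exp 1 - 1) * ξ * C₀) := (Real.exp_add _ _).symm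
      _ ≤ Real.exp (-(3 * ξ)) := by
          apply Real.exp_le_exp.2
          nlinarith [mul_nonneg hξpos.le (by linarith : (0:ℝ) ≤ C₀ - 1)]
  -- assemble
  calc M.μ {ω | 5 * C₀ < ∑ l, (M.W ω i l) ^ 2}
      ≤ M.μ ((⋃ l, bad1 l) ∪ bad2) := measure_mono hsubset
    _ ≤ M.μ (⋃ l, bad1 l) + M.μ bad2 := measure_union_le _ _
    _ ≤ (∑ l : Fin n, M.μ (bad1 l)) + M.μ bad2 := by
        gcongr
        exact (measure_iUnion_le _).trans_eq (tsum_fintype _)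
    _ ≤ ENNReal.ofReal ((n:ℝ) * (ξ ^ m * B)) + ENNReal.ofReal (Real.exp (-(3 * ξ))) :=
        add_le_add hsum1 hb2
    _ ≤ ENNReal.ofReal (Real.exp (-(3 * ξ))) + ENNReal.ofReal (Real.exp (-(3 * ξ))) :=
        add_le_add (ENNReal.ofReal_le_ofReal hrealA) le_rfl
    _ = ENNReal.ofReal (Real.exp (-(3 * ξ)) + Real.exp (-(3 * ξ))) :=
        (ENNReal.ofReal_add (Real.exp_nonneg _) (Real.exp_nonneg _)).symm
    _ ≤ ENNReal.ofReal (Real.exp (-ξ)) := by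
        apply ENNReal.ofReal_le_ofReal
        have hsplit : Real.exp (-(3 * ξ)) = Real.exp (-ξ) * Real.exp (-(2 * ξ)) := by
          rw [← Real.exp_add]; ring_nf
        have h2 : Real.exp (-(2 * ξ)) ≤ 1 / 4 := by
          rw [show -(2*ξ) = -(2*ξ) from rfl, Real.exp_neg, inv_eq_one_div]
          refine one_div_le_one_div_of_le (by norm_num) ?_
          have := Real.add_one_le_exp (2 * ξ)
          linarith
        nlinarith [Real.exp_pos (-ξ), Real.exp_pos (-(2*ξ))]

/-- Frobenius-norm closeness of the leave-one-out degree matrix. -/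
theorem stmt_12 (C₀ : ℝ) (hC₀ : 1 ≤ C₀) :
    ∃ C₆ c₆ : ℝ, 0 < C₆ ∧ 0 < c₆ ∧
      ∀ α a₀ : ℝ, 0 < α → 0 < a₀ → ∃ N : ℕ,
        ∀ n : ℕ, N ≤ n → ∀ M : Mdl n, M.HBase α C₀ a₀ → ∀ i : Fin n,
          1 - ENNReal.ofReal (Real.exp (-(c₆ * xiPar n a₀))) ≤
            M.μ {ω | Real.sqrt (∑ j, ∑ l,
              (Matrix.diagonal (M.Ld ω) j l - Matrix.diagonal (M.Lbr i ω) j l) ^ 2) ≤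
                C₆ / (M.q * M.β)} := by
  refine ⟨8 * C₀ ^ 2, 1, by positivity, one_pos, ?_⟩
  intro α a₀ hα ha₀
  have hξtend : Tendsto (fun n : ℕ => xiPar n a₀) atTop atTop := by
    have h1 : Tendsto (fun x : ℝ => x ^ ((1:ℝ) + a₀)) atTop atTop :=
      tendsto_rpow_atTop (by linarith)
    exact h1.comp (Real.tendsto_log_atTop.comp tendsto_natCast_atTop_atTop)
  have hlogtend : Tendsto (fun n : ℕ => Real.log (xiPar n a₀)) atTop atTop :=
    Real.tendsto_log_atTop.comp hξtend
  have hev : ∀ᶠ n : ℕ in atTop, 8 ≤ Real.log (xiPar n a₀) ∧ C₀ ≤ xiPar n a₀ :=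
    (hlogtend.eventually_ge_atTop 8).and (hξtend.eventually_ge_atTop C₀)
  obtain ⟨N, hN⟩ := Filter.eventually_atTop.1 hev
  refine ⟨max N 2, ?_⟩
  intro n hn M hB i
  have hn2 : 2 ≤ n := le_trans (le_max_right N 2) hn
  obtain ⟨hlog, hC₀ξ⟩ := hN n (le_trans (le_max_left N 2) hn)
  haveI := hB.prob
  have hβ : 0 < M.β := hB.hβ
  have hξnn : 0 ≤ xiPar n a₀ := Real.rpow_nonneg (Real.log_natCast_nonneg n) _
  have hξpos : 0 < xiPar n a₀ := by
    rcases hξnn.eq_or_lt with h | h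
    · exfalso; rw [← h] at hlog; simp [Real.log_zero] at hlog; linarith
    · exact h
  have hq : 0 < M.q := lt_of_lt_of_le (pow_pos hξpos 3) hB.hq1
  have hsub : {ω | ∑ l, (M.W ω i l) ^ 2 ≤ 5 * C₀} ⊆
      {ω | Real.sqrt (∑ j, ∑ l,
        (Matrix.diagonal (M.Ld ω) j l - Matrix.diagonal (M.Lbr i ω) j l) ^ 2) ≤
          8 * C₀ ^ 2 / (M.q * M.β)} :=
    fun ω hω => key_det M C₀ hC₀ hn2 hq hβ hB.hτ0 hB.hτ1 hB.hWsym i ω hω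
  have hkp := key_prob M C₀ a₀ α hC₀ hB hlog hC₀ξ i
  have hms : MeasurableSet {ω | ∑ l, (M.W ω i l) ^ 2 ≤ 5 * C₀} := by
    have hmR : Measurable fun ω => ∑ l, (M.W ω i l) ^ 2 :=
      Finset.measurable_sum Finset.univ fun l _ => (hB.hWmeas i l).pow_const 2
    exact measurableSet_le hmR measurable_const
  have hcompl : {ω | ∑ l, (M.W ω i l) ^ 2 ≤ 5 * C₀}ᶜ =
      {ω | 5 * C₀ < ∑ l, (M.W ω i l) ^ 2} := by
    ext ω; simp [not_le]
  have h1 : M.μ {ω | ∑ l, (M.W ω i l) ^ 2 ≤ 5 * C₀}ᶜ ≤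
      ENNReal.ofReal (Real.exp (-(xiPar n a₀))) := by
    rw [hcompl]; exact hkp
  have hone : M.μ {ω | ∑ l, (M.W ω i l) ^ 2 ≤ 5 * C₀} +
      M.μ {ω | ∑ l, (M.W ω i l) ^ 2 ≤ 5 * C₀}ᶜ = 1 := by
    rw [measure_add_measure_compl hms, measure_univ]
  have h2 : (1 : ENNReal) ≤ M.μ {ω | ∑ l, (M.W ω i l) ^ 2 ≤ 5 * C₀} +
      ENNReal.ofReal (Real.exp (-(xiPar n a₀))) := by
    rw [← hone]
    exact add_le_add le_rfl h1
  have h3 : (1 : ENNReal) - ENNReal.ofReal (Real.exp (-(xiPar n a₀))) ≤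
      M.μ {ω | ∑ l, (M.W ω i l) ^ 2 ≤ 5 * C₀} := tsub_le_iff_right.2 h2
  refine le_trans ?_ (le_trans h3 (measure_mono hsub))
  rw [one_mul]

end
end

section
/- Master determinant equation for the spiked eigenvalues: For any z ∈ ℂ such that W̄ − z·(L/Λ)^{2α} is invertible, writing G(z) := (W̄ − z·(L/Λ)^{2α})^{−1}, one has det(X − z·I_n) = 0 if and only if det(Δ^{−1} + Vᵀ·G(z)·V) = 0. -/
open Matrix

noncomputable section

private theorem aux_det {n K : ℕ} (M : Matrix (Fin n) (Fin n) ℂ)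
    (Vc : Matrix (Fin n) (Fin K) ℂ) (Δc Δi : Matrix (Fin K) (Fin K) ℂ)
    (hM : IsUnit M.det) (hΔ : Δc * Δi = 1) :
    (M + Vc * Δc * Vcᵀ).det = 0 ↔ (Δi + Vcᵀ * M⁻¹ * Vc).det = 0 := by
  have hΔ' : Δi * Δc = 1 := mul_eq_one_comm.mp hΔ
  have hΔdet : Δc.det ≠ 0 := by
    intro h
    have h2 := congrArg Matrix.det hΔ
    rw [Matrix.det_mul, h, zero_mul, Matrix.det_one] at h2
    exact zero_ne_one h2
  have hMdet : M.det ≠ 0 := hM.ne_zero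
  have factor : M + Vc * Δc * Vcᵀ = M * (1 + M⁻¹ * (Vc * Δc * Vcᵀ)) := by
    rw [Matrix.mul_add, Matrix.mul_one, ← Matrix.mul_assoc,
      Matrix.mul_nonsing_inv _ hM, Matrix.one_mul]
  have step : (1 + M⁻¹ * (Vc * Δc * Vcᵀ)).det = ((Δi + Vcᵀ * M⁻¹ * Vc) * Δc).det := by
    have e1 : M⁻¹ * (Vc * Δc * Vcᵀ) = (M⁻¹ * (Vc * Δc)) * Vcᵀ := by
      simp only [Matrix.mul_assoc]
    rw [e1, Matrix.det_one_add_mul_comm]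
    congr 1
    rw [Matrix.add_mul, hΔ']
    simp only [Matrix.mul_assoc]
  rw [factor, Matrix.det_mul, step, Matrix.det_mul]
  simp [mul_eq_zero, hMdet, hΔdet]

/-- master determinant equation for the spiked eigenvalues of the
generalized Laplacian `X = L^{-α} X̃ L^{-α}`. -/
theorem stmt_15 (n K : ℕ) (hn : 2 ≤ n) (hK : 1 ≤ K) (α : ℝ) (hα : 0 < α)
    (Ld Λd : Fin n → ℝ) (hLd : ∀ i, 0 < Ld i) (hΛd : ∀ i, 0 < Λd i)
    (Xt : Matrix (Fin n) (Fin n) ℝ) (hXt : Xtᵀ = Xt)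
    (Δd : Fin K → ℝ) (hΔd : ∀ j, Δd j ≠ 0)
    (V : Matrix (Fin n) (Fin K) ℝ)
    (H Wb LΛ X : Matrix (Fin n) (Fin n) ℝ)
    -- `H = Λ^α V Δ Vᵀ Λ^α`
    (hH : H = Matrix.diagonal (fun i => Λd i ^ α) * V * Matrix.diagonal Δd * Vᵀ *
      Matrix.diagonal fun i => Λd i ^ α)
    -- `W̄ = Λ^{-α}(X̃ − H)Λ^{-α}`
    (hWb : Wb = Matrix.diagonal (fun i => Λd i ^ (-α)) * (Xt - H) *
      Matrix.diagonal fun i => Λd i ^ (-α))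
    -- `(L/Λ)^{2α}`
    (hLΛ : LΛ = Matrix.diagonal fun i => (Ld i / Λd i) ^ (2 * α))
    -- `X = L^{-α} X̃ L^{-α}`
    (hX : X = Matrix.diagonal (fun i => Ld i ^ (-α)) * Xt *
      Matrix.diagonal fun i => Ld i ^ (-α))
    (z : ℂ)
    -- `W̄ − z (L/Λ)^{2α}` invertible; its inverse is `G(z)`
    (hinv : IsUnit ((Wb.map (fun x : ℝ => (x : ℂ))) -
      z • LΛ.map (fun x : ℝ => (x : ℂ))).det) :
    ((X.map (fun x : ℝ => (x : ℂ))) - z • 1).det = 0 ↔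
      ((((Matrix.diagonal Δd)⁻¹).map (fun x : ℝ => (x : ℂ))) +
        (V.map (fun x : ℝ => (x : ℂ)))ᵀ *
          ((Wb.map (fun x : ℝ => (x : ℂ))) - z • LΛ.map (fun x : ℝ => (x : ℂ)))⁻¹ *
          V.map (fun x : ℝ => (x : ℂ))).det = 0 := by
  classical
  subst hX hWb hLΛ hH
  set c : ℝ →+* ℂ := Complex.ofRealHom with hc
  have hΔinvd : (Matrix.diagonal Δd)⁻¹ = Matrix.diagonal (fun j => (Δd j)⁻¹) := by
    apply Matrix.inv_eq_right_inv
    rw [Matrix.diagonal_mul_diagonal,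
      show (fun i => Δd i * (Δd i)⁻¹) = fun _ => (1:ℝ) from
        funext fun i => mul_inv_cancel₀ (hΔd i), Matrix.diagonal_one]
  rw [hΔinvd]
  simp only [show (fun x : ℝ => (x:ℂ)) = ⇑c from rfl] at hinv ⊢
  simp only [Matrix.map_mul, Matrix.map_sub (⇑c) (fun a b => map_sub c a b),
    Matrix.diagonal_map (map_zero c), Matrix.transpose_map] at hinv ⊢
  set Xc := Xt.map ⇑c with hXc
  set Vc := V.map ⇑c with hVc
  set Lm := Matrix.diagonal (fun m => c (Ld m ^ (-α))) with hLm
  set Λm := Matrix.diagonal (fun m => c (Λd m ^ (-α))) with hΛm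
  set Λp := Matrix.diagonal (fun m => c (Λd m ^ α)) with hΛp
  set Δc := Matrix.diagonal (fun m => c (Δd m)) with hΔc
  set Δi := Matrix.diagonal (fun m => c (Δd m)⁻¹) with hΔi
  set Dc := Matrix.diagonal (fun m => c ((Ld m / Λd m) ^ (2 * α))) with hDc
  set M := Λm * (Xc - Λp * Vc * Δc * Vcᵀ * Λp) * Λm - z • Dc with hM
  set E := Matrix.diagonal (fun m => c (Ld m ^ (-α)) * c (Λd m ^ α)) with hE
  -- scalar facts
  have hbb : ∀ i, Λd i ^ α * Λd i ^ (-α) = 1 := fun i => by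
    rw [← Real.rpow_add (hΛd i)]; simp
  have r4 : ∀ i, (Ld i ^ (-α) * Λd i ^ α) * ((Ld i / Λd i) ^ (2*α)) *
      (Ld i ^ (-α) * Λd i ^ α) = 1 := by
    intro i
    have ha : Ld i ^ α ≠ 0 := (Real.rpow_pos_of_pos (hLd i) α).ne'
    have hb : Λd i ^ α ≠ 0 := (Real.rpow_pos_of_pos (hΛd i) α).ne'
    rw [Real.div_rpow (hLd i).le (hΛd i).le, two_mul, Real.rpow_add (hLd i),
      Real.rpow_add (hΛd i), Real.rpow_neg (hLd i).le]
    field_simp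
  -- diagonal products
  have hEΛ : E * Λm = Lm := by
    rw [hE, hΛm, Matrix.diagonal_mul_diagonal]
    refine congrArg Matrix.diagonal (funext fun i => ?_)
    rw [mul_assoc, ← _root_.map_mul, hbb i, _root_.map_one, mul_one]
  have hΛE : Λm * E = Lm := by
    rw [hE, hΛm, Matrix.diagonal_mul_diagonal]
    refine congrArg Matrix.diagonal (funext fun i => ?_)
    rw [mul_comm, mul_assoc, ← _root_.map_mul, hbb i, _root_.map_one, mul_one]
  have hLmΛp : Lm * Λp = E := by
    rw [hE, hΛp, hLm, Matrix.diagonal_mul_diagonal]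
  have hΛpLm : Λp * Lm = E := by
    rw [hE, hΛp, hLm, Matrix.diagonal_mul_diagonal]
    refine congrArg Matrix.diagonal (funext fun i => ?_)
    rw [mul_comm]
  have hEDE : E * Dc * E = 1 := by
    rw [hE, hDc, Matrix.diagonal_mul_diagonal, Matrix.diagonal_mul_diagonal,
      ← Matrix.diagonal_one]
    refine congrArg Matrix.diagonal (funext fun i => ?_)
    simp only [← _root_.map_mul]
    rw [r4 i, _root_.map_one]
  -- key factorization
  have key : Lm * Xc * Lm - z • (1 : Matrix (Fin n) (Fin n) ℂ) =
      E * (M + Vc * Δc * Vcᵀ) * E := by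
    have h1 : E * (Λm * (Xc - Λp * Vc * Δc * Vcᵀ * Λp) * Λm) * E =
        Lm * (Xc - Λp * Vc * Δc * Vcᵀ * Λp) * Lm := by
      calc E * (Λm * (Xc - Λp * Vc * Δc * Vcᵀ * Λp) * Λm) * E
          = (E * Λm) * (Xc - Λp * Vc * Δc * Vcᵀ * Λp) * (Λm * E) := by
            simp only [Matrix.mul_assoc]
        _ = _ := by rw [hEΛ, hΛE]
    have h2 : E * (Vc * Δc * Vcᵀ) * E = Lm * (Λp * Vc * Δc * Vcᵀ * Λp) * Lm := by
      calc E * (Vc * Δc * Vcᵀ) * E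
          = (Lm * Λp) * (Vc * Δc * Vcᵀ) * (Λp * Lm) := by rw [hLmΛp, hΛpLm]
        _ = _ := by simp only [Matrix.mul_assoc]
    calc Lm * Xc * Lm - z • (1 : Matrix (Fin n) (Fin n) ℂ)
        = (Lm * (Xc - Λp * Vc * Δc * Vcᵀ * Λp) * Lm - z • 1) +
            Lm * (Λp * Vc * Δc * Vcᵀ * Λp) * Lm := by
          rw [Matrix.mul_sub, Matrix.sub_mul]; abel
      _ = (E * (Λm * (Xc - Λp * Vc * Δc * Vcᵀ * Λp) * Λm) * E - z • (E * Dc * E)) +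
            E * (Vc * Δc * Vcᵀ) * E := by rw [h1, h2, hEDE]
      _ = E * (M + Vc * Δc * Vcᵀ) * E := by
          have h3 : ∀ (A P D : Matrix (Fin n) (Fin n) ℂ),
              E * ((A - z • D) + P) * E = E * A * E - z • (E * D * E) + E * P * E := by
            intro A P D
            rw [Matrix.mul_add, Matrix.add_mul, Matrix.mul_sub, Matrix.sub_mul,
              Matrix.mul_smul, Matrix.smul_mul]
          rw [hM]
          exact (h3 _ _ _).symm
  -- determinant of E is nonzero
  have hdetE : E.det ≠ 0 := by
    rw [hE, Matrix.det_diagonal]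
    apply Finset.prod_ne_zero_iff.mpr
    intro i _
    exact mul_ne_zero
      (Complex.ofReal_ne_zero.mpr (Real.rpow_pos_of_pos (hLd i) _).ne')
      (Complex.ofReal_ne_zero.mpr (Real.rpow_pos_of_pos (hΛd i) _).ne')
  have hΔprod : Δc * Δi = 1 := by
    rw [hΔc, hΔi, Matrix.diagonal_mul_diagonal, ← Matrix.diagonal_one]
    refine congrArg Matrix.diagonal (funext fun j => ?_)
    rw [← _root_.map_mul, mul_inv_cancel₀ (hΔd j), _root_.map_one]
  rw [key, Matrix.det_mul, Matrix.det_mul]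
  have hiff : (E.det * (M + Vc * Δc * Vcᵀ).det * E.det = 0) ↔
      (M + Vc * Δc * Vcᵀ).det = 0 := by
    simp [mul_eq_zero, hdetE]
  rw [hiff]
  exact aux_det M Vc Δc Δi hinv hΔprod

end
end

section
/- Large-|z| expansion of solutions of the generalized quadratic vector equation (zeroth-order part of the Lemma on Υ): Let n ≥ 1, α > 0, Λ₁,…,Λ_n > 0 and s_{ij} ≥ 0 (1 ≤ i, j ≤ n) be reals, and set S := max_{1≤i≤n} Λ_i^{−2α}·Σ_{j=1}^n Λ_j^{−2α}·s_{ij}. Let C₀ > 0 and let z ∈ ℂ with z ≠ 0 and |z| ≥ 2·S·C₀. Suppose M₁,…,M_n ∈ ℂ satisfy max_i |M_i| ≤ C₀ and the quadratic vector equation 1/M_i = −z − Λ_i^{−2α}·Σ_{j=1}^n Λ_j^{−2α}·s_{ij}·M_j for every i. Then max_{1≤i≤n} |M_i + z^{−1}| ≤ 4·S/|z|³. -/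
noncomputable section

private lemma aux_inv (z w : ℂ) (hz : z ≠ 0) (hw : z + w ≠ 0) :
    -(z + w)⁻¹ + z⁻¹ = w / (z * (z + w)) := by
  field_simp
  ring_nf

/-- large-`|z|` expansion of solutions of the generalized quadratic
vector equation with variance profile `Λ_i^{-2α} s_{ij} Λ_j^{-2α}`. -/
theorem stmt_17 (n : ℕ) (hn : 1 ≤ n) (α : ℝ) (hα : 0 < α)
    (Λ : Fin n → ℝ) (hΛ : ∀ i, 0 < Λ i)
    (s : Fin n → Fin n → ℝ) (hs : ∀ i j, 0 ≤ s i j)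
    (S : ℝ) (hS : S = ⨆ i : Fin n, Λ i ^ (-(2 * α)) * ∑ j, Λ j ^ (-(2 * α)) * s i j)
    (C₀ : ℝ) (hC₀ : 0 < C₀)
    (z : ℂ) (hz : z ≠ 0) (hz2 : 2 * S * C₀ ≤ ‖z‖)
    (M : Fin n → ℂ) (hM : ∀ i, ‖M i‖ ≤ C₀)
    (hQVE : ∀ i, (M i)⁻¹ =
      -z - ((Λ i ^ (-(2 * α)) : ℝ) : ℂ) *
        ∑ j, ((Λ j ^ (-(2 * α)) : ℝ) : ℂ) * (s i j : ℂ) * M j) :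
    ∀ i, ‖M i + z⁻¹‖ ≤ 4 * S / ‖z‖ ^ 3 := by
  have hApos : ∀ i, 0 < Λ i ^ (-(2 * α)) := fun i => Real.rpow_pos_of_pos (hΛ i) _
  set A : Fin n → ℝ := fun i => Λ i ^ (-(2 * α)) with hA
  set T : Fin n → ℂ := fun i =>
    ((A i : ℝ) : ℂ) * ∑ j, ((A j : ℝ) : ℂ) * (s i j : ℂ) * M j with hT
  have hQVE' : ∀ i, (M i)⁻¹ = -z - T i := hQVE
  have hSipos : ∀ i, 0 ≤ A i * ∑ j, A j * s i j := by
    intro i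
    exact mul_nonneg (hApos i).le
      (Finset.sum_nonneg fun j _ => mul_nonneg (hApos j).le (hs i j))
  have hSiS : ∀ i, A i * ∑ j, A j * s i j ≤ S := by
    intro i; rw [hS]
    exact le_ciSup (f := fun i : Fin n =>
        Λ i ^ (-(2 * α)) * ∑ j, Λ j ^ (-(2 * α)) * s i j)
      (Set.Finite.bddAbove (Set.finite_range _)) i
  have hSnn : 0 ≤ S := le_trans (hSipos ⟨0, hn⟩) (hSiS ⟨0, hn⟩)
  have hr : 0 < ‖z‖ := norm_pos_iff.mpr hz
  -- generic bound on T
  have hTbound : ∀ (B : ℝ), 0 ≤ B → (∀ j, ‖M j‖ ≤ B) →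
      ∀ i, ‖T i‖ ≤ S * B := by
    intro B hB hMB i
    have h1 : ‖T i‖ ≤ A i * ∑ j, A j * s i j * B := by
      rw [hT]
      simp only [norm_mul, Complex.norm_real, Real.norm_eq_abs, abs_of_pos (show 0 < A i from hApos i)]
      refine mul_le_mul_of_nonneg_left ?_ (hApos i).le
      calc ‖∑ j, ((A j : ℝ) : ℂ) * (s i j : ℂ) * M j‖
          ≤ ∑ j, ‖((A j : ℝ) : ℂ) * (s i j : ℂ) * M j‖ :=
            norm_sum_le _ _
        _ ≤ ∑ j, A j * s i j * B := by
            refine Finset.sum_le_sum fun j _ => ?_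
            simp only [norm_mul, Complex.norm_real, Real.norm_eq_abs, abs_of_pos (show 0 < A j from hApos j),
              abs_of_nonneg (hs i j)]
            exact mul_le_mul_of_nonneg_left (hMB j)
              (mul_nonneg (hApos j).le (hs i j))
    calc ‖T i‖ ≤ A i * ∑ j, A j * s i j * B := h1
      _ = (A i * ∑ j, A j * s i j) * B := by rw [mul_assoc, Finset.sum_mul]
      _ ≤ S * B := mul_le_mul_of_nonneg_right (hSiS i) hB
  have hTC : ∀ i, ‖T i‖ ≤ S * C₀ := hTbound C₀ hC₀.le hM
  have hSC : S * C₀ ≤ ‖z‖ / 2 := by linarith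
  have hzT : ∀ i, ‖z‖ / 2 ≤ ‖z + T i‖ := by
    intro i
    have h := norm_add_le (z + T i) (-T i)
    simp only [add_neg_cancel_right, norm_neg] at h
    have := hTC i
    linarith
  have hzTne : ∀ i, z + T i ≠ 0 := by
    intro i h
    have h2 := hzT i
    rw [h] at h2
    simp at h2
    linarith
  have hMeq : ∀ i, M i = -(z + T i)⁻¹ := by
    intro i
    have hq : (M i)⁻¹ = -(z + T i) := by rw [hQVE' i]; ring
    rw [← inv_inv (M i), hq, inv_neg]
  have hMabs : ∀ i, ‖M i‖ ≤ 2 / ‖z‖ := by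
    intro i
    rw [hMeq i, norm_neg, norm_inv, inv_eq_one_div,
      div_le_div_iff₀ (norm_pos_iff.mpr (hzTne i)) hr]
    have := hzT i
    linarith
  have hT2 : ∀ i, ‖T i‖ ≤ S * (2 / ‖z‖) :=
    hTbound (2 / ‖z‖) (by positivity) hMabs
  intro i
  have key : M i + z⁻¹ = T i / (z * (z + T i)) := by
    rw [hMeq i]; exact aux_inv z (T i) hz (hzTne i)
  rw [key]
  have hT2i := hT2 i
  have hzTi := hzT i
  generalize T i = w at hT2i hzTi ⊢
  rw [norm_div, norm_mul]
  have hwz : 0 < ‖z + w‖ := lt_of_lt_of_le (by positivity) hzTi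
  have hd1 : (0:ℝ) < ‖z‖ * (‖z‖ / 2) := by positivity
  have hd2 : ‖z‖ * (‖z‖ / 2)
      ≤ ‖z‖ * ‖z + w‖ :=
    mul_le_mul_of_nonneg_left hzTi hr.le
  calc ‖w‖ / (‖z‖ * ‖z + w‖)
      ≤ (S * (2 / ‖z‖)) / (‖z‖ * (‖z‖ / 2)) :=
        div_le_div₀ (by positivity) hT2i hd1 hd2
    _ = 4 * S / ‖z‖ ^ 3 := by field_simp; ring

end
end
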